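/- arXiv:1811.01296 — 7 statements merged into one kernel-verified Lean document; each statement's English description precedes it below -/
import Mathlib

section
/- Let d ≥ 2, let B be a {0,1}-matrix with k rows and m columns such that for all u ∈ ℕ^m and v ∈ {0,…,d−1}^m, Bu = Bv implies u = v. Define the block matrix M with dk+d rows and dm+k columns consisting of: a first block row (B B ⋯ B I) with d copies of B and the k×k identity I; block rows (B, J−B) in positions (i,1) and (i,i) for i = 2,…,d, where J is the k×m all-ones matrix; followed by d rows of ones, one over each block of columns. Then M is a {0,1}-matrix and for all u ∈ ℕ^{dm+k} and v ∈ {0,…,d−1}^{dm+k}, Mu = Mv implies u = v. -/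
/-- the recursive Cantor–Mills style construction. Given a one-sided
d-detecting {0,1}-matrix B (k rows, m columns), the block matrix M with d·k+d rows
and d·m+k columns — first block row (B B ⋯ B I), block rows (B, J−B) at positions
(i,1),(i,i) for i=2,…,d, followed by d all-ones rows, one over each of the column
blocks 2,…,d and the last block — is again a {0,1}-matrix and one-sided d-detecting. -/
theorem detecting_matrix_recursive_step (d k m : ℕ) (hd : 2 ≤ d)
    (B : Matrix (Fin k) (Fin m) ℕ)
    (hB01 : ∀ r c, B r c ≤ 1)
    (hBdet : ∀ u v : Fin m → ℕ, (∀ c, v c < d) →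
      B.mulVec u = B.mulVec v → u = v)
    (M : Matrix ((Fin d × Fin k) ⊕ Fin d) ((Fin d × Fin m) ⊕ Fin k) ℕ)
    (hM : ∀ x y, M x y =
      match x, y with
      | Sum.inl (i, r), Sum.inl (j, c) =>
          if (i : ℕ) = 0 then B r c
          else if (j : ℕ) = 0 then B r c
          else if j = i then 1 - B r c
          else 0
      | Sum.inl (i, r), Sum.inr c' => if (i : ℕ) = 0 ∧ c' = r then 1 else 0
      | Sum.inr t, Sum.inl (j, _) => if (j : ℕ) = (t : ℕ) + 1 then 1 else 0
      | Sum.inr t, Sum.inr _ => if (t : ℕ) = d - 1 then 1 else 0) :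
    (∀ x y, M x y ≤ 1) ∧
    (∀ u v : ((Fin d × Fin m) ⊕ Fin k) → ℕ, (∀ y, v y < d) →
      M.mulVec u = M.mulVec v → u = v) := by
  haveI : NeZero d := ⟨by omega⟩
  constructor
  · intro x y
    have h01 : ∀ r c, B r c ≤ 1 := hB01
    rcases x with ⟨i, r⟩ | t <;> rcases y with ⟨j, c⟩ | c' <;>
      simp only [hM] <;> split_ifs <;>
      first
        | exact hB01 _ _
        | exact Nat.sub_le _ _
        | omega
  · intro u v hv h
    -- row computations for a generic vector w
    have row0 : ∀ (w : ((Fin d × Fin m) ⊕ Fin k) → ℕ) (r : Fin k),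
        M.mulVec w (Sum.inl (0, r)) =
          (∑ j : Fin d, ∑ c : Fin m, B r c * w (Sum.inl (j, c))) + w (Sum.inr r) := by
      intro w r
      simp only [Matrix.mulVec, dotProduct, Fintype.sum_sum_type, Fintype.sum_prod_type, hM]
      simp [Fin.val_zero]
    have rowi : ∀ (w : ((Fin d × Fin m) ⊕ Fin k) → ℕ) (i : Fin d), i ≠ 0 → ∀ (r : Fin k),
        M.mulVec w (Sum.inl (i, r)) =
          (∑ c : Fin m, B r c * w (Sum.inl (0, c))) +
            ∑ c : Fin m, (1 - B r c) * w (Sum.inl (i, c)) := by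
      intro w i hi r
      have hi' : (i : ℕ) ≠ 0 := fun h => hi (Fin.ext h)
      simp only [Matrix.mulVec, dotProduct, Fintype.sum_sum_type, Fintype.sum_prod_type, hM]
      have hsplit : ∀ j : Fin d, ∀ c : Fin m,
          (if (i : ℕ) = 0 then B r c
            else if (j : ℕ) = 0 then B r c
            else if j = i then 1 - B r c else 0) * w (Sum.inl (j, c)) =
          (if j = 0 then B r c * w (Sum.inl (j, c)) else 0) +
            (if j = i then (1 - B r c) * w (Sum.inl (j, c)) else 0) := by
        intro j c
        rcases eq_or_ne j 0 with rfl | hj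
        · simp [hi', Ne.symm hi]
        · have hj' : (j : ℕ) ≠ 0 := fun h => hj (Fin.ext h)
          simp only [if_neg hi', if_neg hj', if_neg hj]
          split_ifs <;> simp
      calc (∑ j : Fin d, ∑ c : Fin m,
              (if (i : ℕ) = 0 then B r c
                else if (j : ℕ) = 0 then B r c
                else if j = i then 1 - B r c else 0) * w (Sum.inl (j, c))) +
            ∑ c' : Fin k, (if (i : ℕ) = 0 ∧ c' = r then 1 else 0) * w (Sum.inr c')
          = (∑ j : Fin d, ((if j = 0 then ∑ c : Fin m, B r c * w (Sum.inl (j, c)) else 0) +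
              (if j = i then ∑ c : Fin m, (1 - B r c) * w (Sum.inl (j, c)) else 0))) + 0 := by
            congr 1
            · refine Finset.sum_congr rfl fun j _ => ?_
              simp only [hsplit]
              rw [Finset.sum_add_distrib]
              congr 1 <;> split_ifs <;> simp
            · simp [hi']
        _ = _ := by
            rw [Finset.sum_add_distrib, Finset.sum_ite_eq' Finset.univ (0 : Fin d),
              Finset.sum_ite_eq' Finset.univ i]
            simp
    have rowt : ∀ (w : ((Fin d × Fin m) ⊕ Fin k) → ℕ) (i : Fin d), i ≠ 0 →
        (∑ c : Fin m, w (Sum.inl (i, c))) = M.mulVec w (Sum.inr ⟨(i : ℕ) - 1, by omega⟩) := by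
      intro w i hi
      have hi' : (i : ℕ) ≠ 0 := fun h => hi (Fin.ext h)
      have hne : (i : ℕ) - 1 ≠ d - 1 := by have := i.isLt; omega
      simp only [Matrix.mulVec, dotProduct, Fintype.sum_sum_type,
        Fintype.sum_prod_type, hM]
      have hkey : ∀ j : Fin d,
          (∑ c : Fin m, (if (j : ℕ) = (i : ℕ) - 1 + 1 then 1 else 0) * w (Sum.inl (j, c)))
          = if j = i then ∑ c : Fin m, w (Sum.inl (j, c)) else 0 := by
        intro j
        have hiff : ((j : ℕ) = (i : ℕ) - 1 + 1) ↔ j = i := by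
          constructor
          · intro hh; exact Fin.ext (by omega)
          · rintro rfl; omega
        simp only [hiff]
        split_ifs <;> simp
      rw [show (∑ j : Fin d, ∑ c : Fin m,
            (if (j : ℕ) = (i : ℕ) - 1 + 1 then 1 else 0) * w (Sum.inl (j, c)))
          = ∑ j : Fin d, if j = i then ∑ c : Fin m, w (Sum.inl (j, c)) else 0 from
          Finset.sum_congr rfl fun j _ => hkey j,
        Finset.sum_ite_eq' Finset.univ i]
      simp [hne]
    have rowlast : ∀ (w : ((Fin d × Fin m) ⊕ Fin k) → ℕ),
        (∑ c' : Fin k, w (Sum.inr c')) = M.mulVec w (Sum.inr ⟨d - 1, by omega⟩) := by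
      intro w
      simp only [Matrix.mulVec, dotProduct, Fintype.sum_sum_type, Fintype.sum_prod_type, hM]
      have hz : ∀ j : Fin d, (j : ℕ) ≠ d - 1 + 1 := fun j => by have := j.isLt; omega
      simp [hz]
    -- cast helper for the (J - B) rows
    have castsub : ∀ (w : ((Fin d × Fin m) ⊕ Fin k) → ℕ) (i : Fin d) (r : Fin k),
        ((∑ c : Fin m, (1 - B r c) * w (Sum.inl (i, c)) : ℕ) : ℤ)
          = (∑ c : Fin m, (w (Sum.inl (i, c)) : ℤ))
            - ∑ c : Fin m, (B r c : ℤ) * w (Sum.inl (i, c)) := by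
      intro w i r
      rw [Nat.cast_sum, ← Finset.sum_sub_distrib]
      refine Finset.sum_congr rfl fun c _ => ?_
      rw [Nat.cast_mul, Nat.cast_sub (hB01 r c)]
      push_cast
      ring
    -- integer equations
    have E0 : ∀ r : Fin k,
        (∑ j : Fin d, ∑ c : Fin m, (B r c : ℤ) * (u (Sum.inl (j, c)) : ℤ))
            + (u (Sum.inr r) : ℤ)
        = (∑ j : Fin d, ∑ c : Fin m, (B r c : ℤ) * (v (Sum.inl (j, c)) : ℤ))
            + (v (Sum.inr r) : ℤ) := by
      intro r
      have h0 := congrFun h (Sum.inl (0, r))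
      rw [row0 u r, row0 v r] at h0
      exact_mod_cast h0
    have S : ∀ i : Fin d, i ≠ 0 →
        (∑ c : Fin m, (u (Sum.inl (i, c)) : ℤ)) = ∑ c : Fin m, (v (Sum.inl (i, c)) : ℤ) := by
      intro i hi
      have h1 := (rowt u i hi).trans ((congrFun h _).trans (rowt v i hi).symm)
      exact_mod_cast h1
    have S' : (∑ r : Fin k, (u (Sum.inr r) : ℤ)) = ∑ r : Fin k, (v (Sum.inr r) : ℤ) := by
      have h1 := (rowlast u).trans ((congrFun h _).trans (rowlast v).symm)
      exact_mod_cast h1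
    have Ei : ∀ i : Fin d, i ≠ 0 → ∀ r : Fin k,
        (∑ c : Fin m, (B r c : ℤ) * (u (Sum.inl (0, c)) : ℤ))
          + ((∑ c : Fin m, (u (Sum.inl (i, c)) : ℤ))
              - ∑ c : Fin m, (B r c : ℤ) * (u (Sum.inl (i, c)) : ℤ))
        = (∑ c : Fin m, (B r c : ℤ) * (v (Sum.inl (0, c)) : ℤ))
          + ((∑ c : Fin m, (v (Sum.inl (i, c)) : ℤ))
              - ∑ c : Fin m, (B r c : ℤ) * (v (Sum.inl (i, c)) : ℤ)) := by
      intro i hi r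
      have h1 := congrFun h (Sum.inl (i, r))
      rw [rowi u i hi r, rowi v i hi r] at h1
      have h2 := congrArg (fun n : ℕ => (n : ℤ)) h1
      simp only [Nat.cast_add, castsub u i r, castsub v i r] at h2
      push_cast at h2
      convert h2 using 2
    -- differences are the same for all blocks
    have hdiff : ∀ (i : Fin d) (r : Fin k),
        (∑ c : Fin m, (B r c : ℤ) * (u (Sum.inl (i, c)) : ℤ))
          - (∑ c : Fin m, (B r c : ℤ) * (v (Sum.inl (i, c)) : ℤ))
        = (∑ c : Fin m, (B r c : ℤ) * (u (Sum.inl (0, c)) : ℤ))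
          - (∑ c : Fin m, (B r c : ℤ) * (v (Sum.inl (0, c)) : ℤ)) := by
      intro i r
      rcases eq_or_ne i 0 with rfl | hi
      · ring
      · have h1 := Ei i hi r
        have h2 := S i hi
        linarith
    have hsum : ∀ r : Fin k,
        (d : ℤ) * ((∑ c : Fin m, (B r c : ℤ) * (u (Sum.inl (0, c)) : ℤ))
            - ∑ c : Fin m, (B r c : ℤ) * (v (Sum.inl (0, c)) : ℤ))
          = (v (Sum.inr r) : ℤ) - (u (Sum.inr r) : ℤ) := by
      intro r
      have h0 := E0 r
      have h2 : (∑ j : Fin d, ∑ c : Fin m, (B r c : ℤ) * (u (Sum.inl (j, c)) : ℤ))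
            - (∑ j : Fin d, ∑ c : Fin m, (B r c : ℤ) * (v (Sum.inl (j, c)) : ℤ))
          = (d : ℤ) * ((∑ c : Fin m, (B r c : ℤ) * (u (Sum.inl (0, c)) : ℤ))
            - ∑ c : Fin m, (B r c : ℤ) * (v (Sum.inl (0, c)) : ℤ)) := by
        rw [← Finset.sum_sub_distrib,
          Finset.sum_congr rfl fun j _ => hdiff j r,
          Finset.sum_const, Finset.card_univ, Fintype.card_fin, nsmul_eq_mul]
      linarith
    have ht : ∀ r : Fin k,
        0 ≤ (∑ c : Fin m, (B r c : ℤ) * (v (Sum.inl (0, c)) : ℤ))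
          - ∑ c : Fin m, (B r c : ℤ) * (u (Sum.inl (0, c)) : ℤ) := by
      intro r
      have h1 := hsum r
      have h2 : (v (Sum.inr r) : ℤ) < d := by exact_mod_cast hv (Sum.inr r)
      have h3 : (0 : ℤ) ≤ u (Sum.inr r) := Int.natCast_nonneg _
      have hd2 : (2 : ℤ) ≤ d := by exact_mod_cast hd
      nlinarith
    have hTsum : (∑ r : Fin k, ((∑ c : Fin m, (B r c : ℤ) * (v (Sum.inl (0, c)) : ℤ))
          - ∑ c : Fin m, (B r c : ℤ) * (u (Sum.inl (0, c)) : ℤ))) = 0 := by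
      have hdpos : (0 : ℤ) < d := by exact_mod_cast (by omega : 0 < d)
      have h5 : (d : ℤ) * ∑ r : Fin k, ((∑ c : Fin m, (B r c : ℤ) * (v (Sum.inl (0, c)) : ℤ))
            - ∑ c : Fin m, (B r c : ℤ) * (u (Sum.inl (0, c)) : ℤ)) = 0 := by
        rw [Finset.mul_sum]
        have : ∀ r : Fin k, (d : ℤ) * ((∑ c : Fin m, (B r c : ℤ) * (v (Sum.inl (0, c)) : ℤ))
              - ∑ c : Fin m, (B r c : ℤ) * (u (Sum.inl (0, c)) : ℤ))
            = (u (Sum.inr r) : ℤ) - (v (Sum.inr r) : ℤ) := by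
          intro r
          have h1 := hsum r
          linear_combination -h1
        rw [Finset.sum_congr rfl fun r _ => this r, Finset.sum_sub_distrib, S']
        ring
      exact (mul_eq_zero.mp h5).resolve_left (by exact_mod_cast hdpos.ne')
    have hT0 : ∀ r : Fin k,
        (∑ c : Fin m, (B r c : ℤ) * (v (Sum.inl (0, c)) : ℤ))
          - (∑ c : Fin m, (B r c : ℤ) * (u (Sum.inl (0, c)) : ℤ)) = 0 := by
      have h6 := (Finset.sum_eq_zero_iff_of_nonneg (fun r _ => ht r)).mp hTsum
      exact fun r => h6 r (Finset.mem_univ r)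
    have hab : ∀ (j : Fin d) (r : Fin k),
        (∑ c : Fin m, (B r c : ℤ) * (u (Sum.inl (j, c)) : ℤ))
          = ∑ c : Fin m, (B r c : ℤ) * (v (Sum.inl (j, c)) : ℤ) := by
      intro j r
      have h1 := hdiff j r
      have h2 := hT0 r
      linarith
    have huv' : ∀ r : Fin k, u (Sum.inr r) = v (Sum.inr r) := by
      intro r
      have h1 := hsum r
      have h2 := hT0 r
      have : (u (Sum.inr r) : ℤ) = v (Sum.inr r) := by
        linear_combination h1 + (d : ℤ) * h2
      exact_mod_cast this
    have hblock : ∀ (j : Fin d) (c : Fin m), u (Sum.inl (j, c)) = v (Sum.inl (j, c)) := by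
      intro j
      have hb := hBdet (fun c => u (Sum.inl (j, c))) (fun c => v (Sum.inl (j, c)))
        (fun c => hv (Sum.inl (j, c))) ?_
      · exact fun c => congrFun hb c
      · funext r
        show (∑ c : Fin m, B r c * u (Sum.inl (j, c))) = ∑ c : Fin m, B r c * v (Sum.inl (j, c))
        exact_mod_cast hab j r
    funext x
    rcases x with ⟨j, c⟩ | r
    · exact hblock j c
    · exact huv' r
end

section
/- Let a ∈ ℕ^n, b ∈ ℕ, and δ = ⌈log(1 + max_i a_i)⌉. For any x ∈ ℕ^n, the equation aᵀx = b holds if and only if there exist natural numbers y_0,…,y_{δ−2} (carry variables, with y_{−1} interpreted as 0) such that for each j = 0,…,δ−1: y_{j−1} + Σ_i a_i[j]·x_i = b[j] + 2·y_j, where a_i[j] denotes the j-th binary digit of a_i, b[j] the j-th binary digit of b for j < δ−1, and b[δ−1] is replaced by ⌊b/2^{δ−1}⌋, and y_{δ−1} is replaced by 0. -/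
private lemma modPowSucc (a j : ℕ) :
    a % 2 ^ (j + 1) = a % 2 ^ j + 2 ^ j * (if a.testBit j then 1 else 0) := by
  rw [pow_succ, Nat.mod_mul, Nat.testBit_eq_decide_div_mod_eq]
  have : a / 2 ^ j % 2 = 0 ∨ a / 2 ^ j % 2 = 1 := Nat.mod_two_eq_zero_or_one _
  rcases this with h | h <;> simp [h]

private lemma sumBits (b m : ℕ) :
    ∑ j ∈ Finset.range m, 2 ^ j * (if b.testBit j then 1 else 0) = b % 2 ^ m := by
  induction m with
  | zero => simp [Nat.mod_one]
  | succ m ih => rw [Finset.sum_range_succ, ih, modPowSucc]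

/-- bitwise decomposition of a single linear constraint.
With δ = ⌈log(1 + maxᵢ aᵢ)⌉, for x ∈ ℕ^n the equation aᵀx = b holds iff there
are carry variables y₀,…,y_{δ−2} ∈ ℕ such that for each j = 0,…,δ−1:
y_{j−1} + Σᵢ aᵢ[j]·xᵢ = b[j] + 2·y_j, where y_{−1} = 0, y_{δ−1} is replaced by 0,
and b[δ−1] is replaced by ⌊b/2^{δ−1}⌋. -/
theorem bitwise_constraint_decomposition (n : ℕ) (a : Fin n → ℕ) (b : ℕ)
    (x : Fin n → ℕ) (δ : ℕ)
    (hδ : δ = Nat.clog 2 (1 + Finset.univ.sup a)) (hδ1 : 1 ≤ δ) :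
    (∑ i, a i * x i = b) ↔
      ∃ y : ℕ → ℕ, ∀ j < δ,
        (if j = 0 then 0 else y (j - 1)) +
            ∑ i, (if (a i).testBit j then 1 else 0) * x i =
          (if j = δ - 1 then b / 2 ^ (δ - 1)
            else if b.testBit j then 1 else 0) +
            2 * (if j = δ - 1 then 0 else y j) := by
  have ha : ∀ i, a i < 2 ^ δ := by
    intro i
    have h1 : a i ≤ Finset.univ.sup a := Finset.le_sup (Finset.mem_univ i)
    have h2 : 1 + Finset.univ.sup a ≤ 2 ^ δ := hδ ▸ Nat.le_pow_clog one_lt_two _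
    omega
  set A : ℕ → ℕ := fun j => ∑ i, (if (a i).testBit j then 1 else 0) * x i with hA
  set T : ℕ → ℕ := fun j => ∑ i, a i % 2 ^ j * x i with hT
  have hstep : ∀ j, T (j + 1) = T j + 2 ^ j * A j := by
    intro j
    simp only [hT, hA, Finset.mul_sum, ← Finset.sum_add_distrib]
    refine Finset.sum_congr rfl fun i _ => ?_
    rw [modPowSucc, add_mul, mul_assoc]
  have hT0 : T 0 = 0 := by simp [hT, Nat.mod_one]
  have hTδ : T δ = ∑ i, a i * x i := by
    refine Finset.sum_congr rfl fun i _ => ?_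
    rw [Nat.mod_eq_of_lt (ha i)]
  constructor
  · -- forward direction
    intro hb
    have heq : ∀ j, T j = 2 ^ j * (T j / 2 ^ j) + b % 2 ^ j := by
      intro j
      have hmod : T j % 2 ^ j = b % 2 ^ j := by
        rw [← hb, hT]
        rw [Finset.sum_nat_mod, Finset.sum_nat_mod Finset.univ _ (fun i => a i * x i)]
        congr 1
        exact Finset.sum_congr rfl fun i _ => Nat.mod_mul_mod _ _ _
      conv_lhs => rw [← Nat.div_add_mod (T j) (2 ^ j)]
      rw [hmod]
    -- the "true" carry constraint for every j
    have key : ∀ j, T j / 2 ^ j + A j =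
        (if b.testBit j then 1 else 0) + 2 * (T (j + 1) / 2 ^ (j + 1)) := by
      intro j
      have e1 := heq j
      have e2 := heq (j + 1)
      have e3 := hstep j
      have e4 := modPowSucc b j
      have : 2 ^ j * (T j / 2 ^ j + A j) =
          2 ^ j * ((if b.testBit j then 1 else 0) + 2 * (T (j + 1) / 2 ^ (j + 1))) := by
        have hp : (2 : ℕ) ^ (j + 1) = 2 ^ j * 2 := pow_succ 2 j
        rw [hp] at e2 e4
        ring_nf
        ring_nf at e1 e2 e3 e4
        omega
      exact Nat.eq_of_mul_eq_mul_left (by positivity) this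
    refine ⟨fun j => T (j + 1) / 2 ^ (j + 1), fun j hj => ?_⟩
    have hcin : (if j = 0 then 0 else T (j - 1 + 1) / 2 ^ (j - 1 + 1)) = T j / 2 ^ j := by
      rcases Nat.eq_zero_or_pos j with h | h
      · simp [h, hT0]
      · rw [if_neg (by omega)]
        congr 1 <;> congr 1 <;> omega
    rw [hcin]
    rcases eq_or_ne j (δ - 1) with hlast | hlast
    · rw [if_pos hlast, if_pos hlast]
      have hTb : T δ = b := hTδ.trans hb
      have hyδ : T δ / 2 ^ δ = b / 2 ^ δ := by rw [hTb]
      have hδj : j + 1 = δ := by omega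
      have hk := key j
      rw [hδj, hyδ] at hk
      -- b / 2 ^ (δ-1) = bit + 2 * (b / 2 ^ δ)
      have hsplit : b / 2 ^ (δ - 1) = (if b.testBit j then 1 else 0) + 2 * (b / 2 ^ δ) := by
        have h1 : b / 2 ^ δ = b / 2 ^ (δ - 1) / 2 := by
          rw [Nat.div_div_eq_div_mul, ← pow_succ]
          congr 2
          omega
        have h2 : (if b.testBit j then 1 else 0) = b / 2 ^ j % 2 := by
          rw [Nat.testBit_eq_decide_div_mod_eq]
          have := Nat.mod_two_eq_zero_or_one (b / 2 ^ j)
          rcases this with h | h <;> simp [h]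
        rw [h1, h2, hlast]
        omega
      rw [hsplit]
      have hAj : A j = ∑ i, (if (a i).testBit j then 1 else 0) * x i := rfl
      omega
    · rw [if_neg hlast, if_neg hlast]
      exact key j
  · -- backward direction
    rintro ⟨y, hy⟩
    obtain ⟨m, rfl⟩ : ∃ m, δ = m + 1 := ⟨δ - 1, by omega⟩
    have hsum : ∑ j ∈ Finset.range (m + 1),
        2 ^ j * ((if j = 0 then 0 else y (j - 1)) + A j) =
        ∑ j ∈ Finset.range (m + 1),
        2 ^ j * ((if j = m + 1 - 1 then b / 2 ^ (m + 1 - 1)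
            else if b.testBit j then 1 else 0) +
          2 * (if j = m + 1 - 1 then 0 else y j)) := by
      refine Finset.sum_congr rfl fun j hj => ?_
      rw [hy j (Finset.mem_range.mp hj)]
    simp only [Nat.add_sub_cancel, mul_add] at hsum
    rw [Finset.sum_add_distrib, Finset.sum_add_distrib] at hsum
    -- left carries
    have hL : ∑ j ∈ Finset.range (m + 1), 2 ^ j * (if j = 0 then 0 else y (j - 1)) =
        ∑ k ∈ Finset.range m, 2 ^ (k + 1) * y k := by
      rw [Finset.sum_range_succ']
      simp
    -- right carries
    have hR : ∑ j ∈ Finset.range (m + 1), 2 ^ j * (2 * (if j = m then 0 else y j)) =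
        ∑ k ∈ Finset.range m, 2 ^ (k + 1) * y k := by
      rw [Finset.sum_range_succ]
      rw [if_pos rfl]
      rw [Finset.sum_congr rfl (fun j hj => by
        rw [if_neg (by exact Nat.ne_of_lt (Finset.mem_range.mp hj))])]
      simp [pow_succ]
      ring_nf
    -- bit sums of a·x
    have hAx : ∑ j ∈ Finset.range (m + 1), 2 ^ j * A j = ∑ i, a i * x i := by
      simp only [hA, Finset.mul_sum]
      rw [Finset.sum_comm]
      refine Finset.sum_congr rfl fun i _ => ?_
      have : ∀ j, 2 ^ j * ((if (a i).testBit j then 1 else 0) * x i) =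
          (2 ^ j * (if (a i).testBit j then 1 else 0)) * x i := fun j => by ring
      rw [Finset.sum_congr rfl fun j _ => this j, ← Finset.sum_mul, sumBits,
        Nat.mod_eq_of_lt (ha i)]
    -- bit sums of b
    have hB : ∑ j ∈ Finset.range (m + 1),
        2 ^ j * (if j = m then b / 2 ^ m else if b.testBit j then 1 else 0) = b := by
      rw [Finset.sum_range_succ, if_pos rfl]
      rw [Finset.sum_congr rfl (fun j hj => by
        rw [if_neg (Nat.ne_of_lt (Finset.mem_range.mp hj))])]
      rw [sumBits]
      exact Nat.mod_add_div b (2 ^ m)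
    rw [hL, hAx, hB, hR] at hsum
    omega
end

section
/- If A is an integer matrix with exactly one row, then every element of the Graver basis of A has ℓ_1-norm at most 2‖A‖_∞ + 1. -/
def SignCompat {n : Type*} (a b : n → ℤ) : Prop := ∀ i, 0 ≤ a i * b i

def ConformalLE {n : Type*} (a b : n → ℤ) : Prop :=
  SignCompat a b ∧ ∀ i, |a i| ≤ |b i|

def GraverBasis {k n : Type*} [Fintype n] (A : Matrix k n ℤ) : Set (n → ℤ) :=
  {u | u ≠ 0 ∧ A.mulVec u = 0 ∧
    ∀ v : n → ℤ, v ≠ 0 → A.mulVec v = 0 → ConformalLE v u → v = u}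

private lemma abs_sign_le_one (x : ℤ) : |x.sign| ≤ 1 := by
  cases x with
  | ofNat m => cases m <;> simp [Int.sign]
  | negSucc m => simp [Int.sign]

private lemma sign_mul_self_nonneg (x : ℤ) : 0 ≤ x.sign * x := by
  rcases lt_trichotomy x 0 with h|h|h
  · rw [Int.sign_eq_neg_one_of_neg h]; omega
  · simp [h]
  · rw [Int.sign_eq_one_of_pos h]; omega

private lemma list_sum_nonpos (l : List ℤ) (h : ∀ x ∈ l, x ≤ 0) : l.sum ≤ 0 := by
  induction l with
  | nil => simp
  | cons x l ih =>
    have hx := h x (by simp)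
    have := ih (fun y hy => h y (by simp [hy]))
    simp only [List.sum_cons]; omega

/-- sum of a mapped list as a finite sum over counts. -/
private lemma list_sum_map_count {n : ℕ} (l : List (Fin n)) (f : Fin n → ℤ) :
    (l.map f).sum = ∑ i, (l.count i : ℤ) * f i := by
  induction l with
  | nil => simp
  | cons x l ih =>
    simp only [List.map_cons, List.sum_cons, ih, List.count_cons, beq_iff_eq]
    have key : ∀ i : Fin n, ((l.count i + if x = i then 1 else 0 : ℕ) : ℤ) * f i
        = (l.count i : ℤ) * f i + (if x = i then f i else 0) := by
      intro i
      by_cases h : x = i <;> simp [h] <;> push_cast <;> ring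
    rw [Finset.sum_congr rfl (fun i _ => key i), Finset.sum_add_distrib,
      Finset.sum_ite_eq Finset.univ x f]
    simp [add_comm]

private lemma list_length_count {n : ℕ} (l : List (Fin n)) :
    (l.length : ℤ) = ∑ i, (l.count i : ℤ) := by
  have := list_sum_map_count l (fun _ => (1:ℤ))
  simpa using this

/-- greedy reordering: partial sums stay within [-M, M]. -/
private lemma greedy {n : ℕ} (c : Fin n → ℤ) (M : ℤ) :
    ∀ (N : ℕ) (L : List (Fin n)), L.length = N →
      (∀ i ∈ L, |c i| ≤ M) → ∀ s : ℤ, |s| ≤ M → s + (L.map c).sum = 0 →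
      ∃ L' : List (Fin n), L'.Perm L ∧ ∀ p : ℕ, |s + ((L'.take p).map c).sum| ≤ M := by
  intro N
  induction N using Nat.strong_induction_on with
  | _ N ih =>
    intro L hlen hc s hs hsum
    cases L with
    | nil => exact ⟨[], .refl _, by intro p; simpa using hs⟩
    | cons hd tl =>
      set L : List (Fin n) := hd :: tl with hL
      have hex : ∃ x ∈ L, |s + c x| ≤ M := by
        rcases lt_trichotomy s 0 with h | h | h
        · -- need x with c x > 0
          have hpos : 0 < (L.map c).sum := by omega
          have : ∃ x ∈ L, 0 < c x := by
            by_contra hcon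
            push_neg at hcon
            have : (L.map c).sum ≤ 0 := list_sum_nonpos _ (by
              intro y hy
              obtain ⟨x, hx, rfl⟩ := List.mem_map.mp hy
              exact hcon x hx)
            omega
          obtain ⟨x, hx, hcx⟩ := this
          have h1 := hc x hx
          exact ⟨x, hx, by rw [abs_le] at *; omega⟩
        · refine ⟨hd, by simp [hL], ?_⟩
          have := hc hd (by simp [hL])
          rw [abs_le] at *; omega
        · have hneg : (L.map c).sum < 0 := by omega
          have : ∃ x ∈ L, c x < 0 := by
            by_contra hcon
            push_neg at hcon
            have : 0 ≤ (L.map c).sum := List.sum_nonneg (by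
              intro y hy
              obtain ⟨x, hx, rfl⟩ := List.mem_map.mp hy
              exact hcon x hx)
            omega
          obtain ⟨x, hx, hcx⟩ := this
          have h1 := hc x hx
          exact ⟨x, hx, by rw [abs_le] at *; omega⟩
      obtain ⟨x, hxmem, hxs⟩ := hex
      have hperm : L.Perm (x :: L.erase x) := List.perm_cons_erase hxmem
      have hsums : (L.map c).sum = c x + ((L.erase x).map c).sum := by
        have := (hperm.map c).sum_eq
        simpa using this
      have hlen' : (L.erase x).length = N - 1 := by
        rw [List.length_erase_of_mem hxmem, hlen]
      have hN : 0 < N := by rw [← hlen]; simp [hL]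
      obtain ⟨L'', hperm'', hpre⟩ := ih (N-1) (by omega) (L.erase x) hlen'
        (fun i hi => hc i (List.mem_of_mem_erase hi)) (s + c x) hxs (by omega)
      refine ⟨x :: L'', (hperm''.cons x).trans hperm.symm, ?_⟩
      intro p
      cases p with
      | zero => simpa using hs
      | succ p =>
        have := hpre p
        simpa [List.take_succ_cons, ← add_assoc] using this

/-- if A has exactly one row, every Graver basis element has
ℓ₁-norm at most 2‖A‖_∞ + 1. -/
theorem graver_one_row_bound (n : ℕ) (A : Matrix (Fin 1) (Fin n) ℤ)
    (u : Fin n → ℤ) (hu : u ∈ GraverBasis A) :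
    ∑ i, |u i| ≤ 2 * ((Finset.univ.sup fun i => (A 0 i).natAbs : ℕ) : ℤ) + 1 := by
  set M : ℤ := ((Finset.univ.sup fun i => (A 0 i).natAbs : ℕ) : ℤ) with hM
  have hM0 : 0 ≤ M := Int.natCast_nonneg _
  have ha : ∀ i, |A 0 i| ≤ M := by
    intro i
    rw [Int.abs_eq_natAbs, hM]
    exact Nat.cast_le.mpr (Finset.le_sup (f := fun j => (A 0 j).natAbs) (Finset.mem_univ i))
  set c : Fin n → ℤ := fun i => A 0 i * (u i).sign with hcdef
  have hc : ∀ i, |c i| ≤ M := by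
    intro i
    rw [hcdef]
    calc |A 0 i * (u i).sign| = |A 0 i| * |(u i).sign| := abs_mul _ _
      _ ≤ |A 0 i| * 1 := mul_le_mul_of_nonneg_left (abs_sign_le_one _) (abs_nonneg _)
      _ = |A 0 i| := mul_one _
      _ ≤ M := ha i
  set L0 : List (Fin n) := (List.finRange n).flatMap (fun i => List.replicate (u i).natAbs i)
    with hL0
  have hcount0 : ∀ i, L0.count i = (u i).natAbs := by
    intro i
    rw [hL0, List.count_flatMap]
    have : ((List.finRange n).map fun a => (List.replicate (u a).natAbs a).count i).sum
        = ∑ j : Fin n, if i = j then (u j).natAbs else 0 := by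
      rw [Fin.sum_univ_def]
      congr 1
      apply List.map_congr_left
      intro j _
      rw [List.count_replicate]
      simp only [beq_iff_eq]
      by_cases h : i = j
      · subst h; simp
      · rw [if_neg (fun hji => h hji.symm), if_neg h]
    simp only [Function.comp_def]
    rw [this]
    simp [Finset.sum_ite_eq]
  have hmem0 : ∀ x ∈ L0, u x ≠ 0 := by
    intro x hx
    rw [hL0] at hx
    simp only [List.mem_flatMap, List.mem_replicate] at hx
    obtain ⟨j, _, hne, rfl⟩ := hx
    intro h
    exact hne (by simp [h])
  have hker : ∑ i, A 0 i * u i = 0 := by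
    have := congrFun hu.2.1 0
    simpa [Matrix.mulVec, dotProduct] using this
  have hsum0 : (L0.map c).sum = 0 := by
    rw [list_sum_map_count]
    calc ∑ i, (L0.count i : ℤ) * c i = ∑ i, A 0 i * ((u i).sign * (u i).natAbs) := by
          apply Finset.sum_congr rfl
          intro i _
          rw [hcount0 i, hcdef]; ring
      _ = ∑ i, A 0 i * u i := by
          apply Finset.sum_congr rfl
          intro i _
          rw [Int.sign_mul_natAbs]
      _ = 0 := hker
  obtain ⟨L', hL'perm, hpre⟩ := greedy c M L0.length L0 rfl (fun i _ => hc i) 0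
    (by simpa using hM0) (by simpa using hsum0)
  simp only [zero_add] at hpre
  by_contra hcon
  push_neg at hcon
  -- N := length L'
  have hcntL' : ∀ i, (L'.count i : ℤ) = |u i| := by
    intro i
    rw [hL'perm.count_eq, hcount0, Int.abs_eq_natAbs]
  have hlenL' : (L'.length : ℤ) = ∑ i, |u i| := by
    rw [list_length_count]
    exact Finset.sum_congr rfl (fun i _ => hcntL' i)
  have hNbig : 2 * M + 2 ≤ (L'.length : ℤ) := by omega
  -- pigeonhole on partial sums
  set S : ℕ → ℤ := fun p => ((L'.take p).map c).sum with hSdef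
  have hpigeon : ∃ p₀ q₀ : ℕ, p₀ < q₀ ∧ q₀ < L'.length ∧ S (p₀+1) = S (q₀+1) := by
    have hcard : (Finset.Icc (-M) M).card < Fintype.card (Fin L'.length) := by
      rw [Int.card_Icc, Fintype.card_fin]
      omega
    obtain ⟨p, _, q, _, hpq, heq⟩ := Finset.exists_ne_map_eq_of_card_lt_of_maps_to
      (s := (Finset.univ : Finset (Fin L'.length))) (t := Finset.Icc (-M) M)
      (by simpa using hcard)
      (fun p _ => by
        rw [Finset.mem_coe, Finset.mem_Icc, ← abs_le]
        exact hpre ((p : ℕ)+1))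
    have hvalne : (p : ℕ) ≠ (q : ℕ) := fun h => hpq (Fin.ext h)
    rcases lt_or_gt_of_ne hvalne with h | h
    · exact ⟨p, q, h, q.isLt, heq⟩
    · exact ⟨q, p, h, p.isLt, heq.symm⟩
  obtain ⟨p₀, q₀, hlt, hqN, heqS⟩ := hpigeon
  set seg : List (Fin n) := (L'.drop (p₀+1)).take (q₀ - p₀) with hseg
  have htake : L'.take (q₀+1) = L'.take (p₀+1) ++ seg := by
    have h1 : p₀+1 + (q₀-p₀) = q₀+1 := by omega
    rw [hseg, ← h1, List.take_add]
  have hsegsum : (seg.map c).sum = 0 := by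
    have := heqS
    rw [hSdef] at this
    simp only [htake, List.map_append, List.sum_append] at this
    omega
  have hseglen : seg.length = q₀ - p₀ := by
    rw [hseg, List.length_take, List.length_drop]
    omega
  have hsub : seg.Sublist L' := (List.take_sublist _ _).trans (List.drop_sublist _ _)
  have hcnt : ∀ i, (seg.count i : ℤ) ≤ |u i| := by
    intro i
    rw [← hcntL' i]
    exact_mod_cast hsub.count_le i
  set v : Fin n → ℤ := fun i => (seg.count i : ℤ) * (u i).sign with hv
  -- v ≠ 0
  have hsegne : seg ≠ [] := by
    intro h
    rw [h] at hseglen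
    simp at hseglen
    omega
  have hv0 : v ≠ 0 := by
    intro h
    have hx : seg.head hsegne ∈ seg := List.head_mem hsegne
    have hcx : 0 < seg.count (seg.head hsegne) := List.count_pos_iff.mpr hx
    have hux : u (seg.head hsegne) ≠ 0 :=
      hmem0 _ (hL'perm.mem_iff.mp (hsub.mem hx))
    have := congrFun h (seg.head hsegne)
    rw [hv] at this
    simp only [Pi.zero_apply] at this
    rcases mul_eq_zero.mp this with h1 | h1
    · omega
    · exact hux (Int.sign_eq_zero_iff_zero.mp h1)
  -- A v = 0
  have hAv : A.mulVec v = 0 := by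
    funext j
    have hj : j = 0 := Subsingleton.elim j 0
    subst hj
    have : ∑ i, A 0 i * v i = 0 := by
      have h2 : ∑ i, A 0 i * v i = ∑ i, (seg.count i : ℤ) * c i := by
        apply Finset.sum_congr rfl
        intro i _
        rw [hv, hcdef]; ring
      rw [h2, ← list_sum_map_count, hsegsum]
    simpa [Matrix.mulVec, dotProduct] using this
  -- conformal
  have hconf : ConformalLE v u := by
    constructor
    · intro i
      rw [hv]
      have : (seg.count i : ℤ) * (u i).sign * u i
          = (seg.count i : ℤ) * ((u i).sign * u i) := by ring
      rw [this]
      exact mul_nonneg (Int.natCast_nonneg _) (sign_mul_self_nonneg _)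
    · intro i
      rw [hv]
      calc |(seg.count i : ℤ) * (u i).sign| = (seg.count i : ℤ) * |(u i).sign| := by
            rw [abs_mul, abs_of_nonneg (Int.natCast_nonneg _)]
        _ ≤ (seg.count i : ℤ) * 1 :=
            mul_le_mul_of_nonneg_left (abs_sign_le_one _) (Int.natCast_nonneg _)
        _ = (seg.count i : ℤ) := mul_one _
        _ ≤ |u i| := hcnt i
  -- v ≠ u : sum of abs strictly smaller
  have hvu : v ≠ u := by
    intro h
    have hsv : ∑ i, |v i| ≤ (seg.length : ℤ) := by
      rw [list_length_count]
      apply Finset.sum_le_sum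
      intro i _
      rw [hv]
      calc |(seg.count i : ℤ) * (u i).sign| = (seg.count i : ℤ) * |(u i).sign| := by
            rw [abs_mul, abs_of_nonneg (Int.natCast_nonneg _)]
        _ ≤ (seg.count i : ℤ) * 1 :=
            mul_le_mul_of_nonneg_left (abs_sign_le_one _) (Int.natCast_nonneg _)
        _ = (seg.count i : ℤ) := mul_one _
    rw [h, ← hlenL'] at hsv
    have : seg.length < L'.length := by omega
    rw [hseglen] at this
    omega
  exact hvu (hu.2.2 v hv0 hAv hconf)
end

section
/- For every integer matrix A, g_1(A) ≤ (2‖A‖_∞ + 1)^{2^{td_D(A)} − 1}, where td_D(A) is the dual treedepth of A. -/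
/-- G has treedepth at most h iff there is a forest order on V (a partial order
whose down-sets below any element are chains) of height at most h (all chains
have at most h elements) in which every edge of G joins comparable vertices. -/
def TreedepthLE {V : Type*} (G : SimpleGraph V) (h : ℕ) : Prop :=
  ∃ le : V → V → Prop,
    (∀ v, le v v) ∧
    (∀ a b c, le a b → le b c → le a c) ∧
    (∀ a b, le a b → le b a → a = b) ∧
    (∀ a b c, le a c → le b c → le a b ∨ le b a) ∧
    (∀ a b, G.Adj a b → le a b ∨ le b a) ∧
    (∀ s : Finset V, (∀ a ∈ s, ∀ b ∈ s, le a b ∨ le b a) → s.card ≤ h)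

/-- The treedepth of a graph. -/
noncomputable def treedepth {V : Type*} (G : SimpleGraph V) : ℕ :=
  sInf {h | TreedepthLE G h}

/-- The dual (constraint) graph of a matrix: vertices are the rows, two distinct
rows adjacent iff some column is nonzero in both. -/
def dualGraph {k n : Type*} (A : Matrix k n ℤ) : SimpleGraph k :=
  SimpleGraph.fromRel fun i j => ∃ col, A i col ≠ 0 ∧ A j col ≠ 0



-- sign compatible + equal abs → equal
lemma aux_conf_eq (a b : ℤ) (h : 0 ≤ a * b) (h2 : |a| = |b|) : a = b := by
  rcases mul_nonneg_iff.mp h with ⟨h3, h4⟩ | ⟨h3, h4⟩ <;>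
    [rw [abs_of_nonneg h3, abs_of_nonneg h4] at h2;
     rw [abs_of_nonpos h3, abs_of_nonpos h4] at h2] <;> omega

-- subtraction along conformal order
lemma aux_sub_conf (v u : ℤ) (h1 : 0 ≤ v * u) (h2 : |v| ≤ |u|) :
    0 ≤ (u - v) * u ∧ |u - v| = |u| - |v| := by
  rcases mul_nonneg_iff.mp h1 with ⟨h3, h4⟩ | ⟨h3, h4⟩
  · rw [abs_of_nonneg h3, abs_of_nonneg h4] at h2 ⊢
    rw [abs_of_nonneg (by omega : (0:ℤ) ≤ u - v)]
    constructor
    · exact mul_nonneg (by omega) h4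
    · omega
  · rw [abs_of_nonpos h3, abs_of_nonpos h4] at h2 ⊢
    rw [abs_of_nonpos (by omega : u - v ≤ 0)]
    constructor
    · exact mul_nonneg_iff.mpr (Or.inr ⟨by omega, h4⟩)
    · omega

-- sign chain: x compat w, w compat u, |x| ≤ |w| → x compat u
lemma aux_sign_chain (x w u : ℤ) (h1 : 0 ≤ x * w) (h2 : 0 ≤ w * u) (h3 : |x| ≤ |w|) :
    0 ≤ x * u := by
  rcases mul_nonneg_iff.mp h1 with ⟨a1, a2⟩ | ⟨a1, a2⟩ <;>
  rcases mul_nonneg_iff.mp h2 with ⟨b1, b2⟩ | ⟨b1, b2⟩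
  · exact mul_nonneg a1 b2
  · have hw : w = 0 := le_antisymm b1 a2
    have hx : x = 0 := by rw [hw] at h3; simpa using h3
    simp [hx]
  · have hw : w = 0 := le_antisymm a2 b1
    have hx : x = 0 := by rw [hw] at h3; simpa using h3
    simp [hx]
  · exact mul_nonneg_iff.mpr (Or.inr ⟨a1, b2⟩)

lemma conformalLE_trans {n : Type*} {a b c : n → ℤ} (h1 : ConformalLE a b) (h2 : ConformalLE b c) :
    ConformalLE a c := by
  refine ⟨fun i => aux_sign_chain _ _ _ (h1.1 i) (h2.1 i) (h1.2 i), fun i => (h1.2 i).trans (h2.2 i)⟩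

-- list of same-signed (w.r.t. c) integers: sum is same-signed and abs adds
lemma aux_list_sign (c : ℤ) (l : List ℤ) (h : ∀ x ∈ l, 0 ≤ x * c)
    (hb : (l.map (fun x => |x|)).sum ≤ |c|) :
    0 ≤ l.sum * c ∧ |l.sum| = (l.map (fun x => |x|)).sum := by
  rcases lt_trichotomy c 0 with hc | hc | hc
  · have hx : ∀ x ∈ l, x ≤ 0 := by
      intro x hx
      by_contra hxx
      push_neg at hxx
      have := mul_neg_of_pos_of_neg hxx hc
      exact absurd (h x hx) (by omega)
    have key : ∀ l' : List ℤ, (∀ x ∈ l', x ≤ 0) → l'.sum ≤ 0 ∧ |l'.sum| = (l'.map (fun x => |x|)).sum := by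
      intro l'
      induction l' with
      | nil => simp
      | cons a t ih =>
        intro hh
        have ha := hh a (by simp)
        have ht := ih (fun x hx => hh x (by simp [hx]))
        simp only [List.sum_cons, List.map_cons]
        constructor
        · omega
        · rw [abs_of_nonpos (by omega : a + t.sum ≤ 0), abs_of_nonpos ha, ← ht.2,
            abs_of_nonpos ht.1]
          omega
    obtain ⟨hs, he⟩ := key l hx
    exact ⟨mul_nonneg_iff.mpr (Or.inr ⟨hs, le_of_lt hc⟩), he⟩
  · subst hc
    simp only [abs_zero] at hb
    have hz : ∀ x ∈ l, x = 0 := by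
      intro x hx
      have h1 : |x| ≤ (l.map (fun x => |x|)).sum :=
        List.single_le_sum (by intro y hy; simp at hy; obtain ⟨a, _, rfl⟩ := hy; exact abs_nonneg a) _
          (List.mem_map_of_mem hx)
      have := abs_nonneg x
      have : |x| = 0 := by omega
      exact abs_eq_zero.mp this
    have : l.sum = 0 := List.sum_eq_zero hz
    rw [this]
    constructor
    · simp
    · have : (l.map (fun x => |x|)).sum = 0 := List.sum_eq_zero (by
        intro y hy; simp at hy; obtain ⟨a, ha, rfl⟩ := hy; simp [hz a ha])
      simp [this]
  · have hx : ∀ x ∈ l, 0 ≤ x := by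
      intro x hx
      by_contra hxx
      push_neg at hxx
      have := mul_neg_of_neg_of_pos hxx hc
      exact absurd (h x hx) (by omega)
    have key : ∀ l' : List ℤ, (∀ x ∈ l', 0 ≤ x) → 0 ≤ l'.sum ∧ |l'.sum| = (l'.map (fun x => |x|)).sum := by
      intro l'
      induction l' with
      | nil => simp
      | cons a t ih =>
        intro hh
        have ha := hh a (by simp)
        have ht := ih (fun x hx => hh x (by simp [hx]))
        simp only [List.sum_cons, List.map_cons]
        constructor
        · omega
        · rw [abs_of_nonneg (by omega : 0 ≤ a + t.sum), abs_of_nonneg ha, ← ht.2,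
            abs_of_nonneg ht.1]
    obtain ⟨hs, he⟩ := key l hx
    exact ⟨mul_nonneg hs (le_of_lt hc), he⟩


def norm1 {n : ℕ} (u : Fin n → ℤ) : ℤ := ∑ i, |u i|

lemma norm1_nonneg {n : ℕ} (u : Fin n → ℤ) : 0 ≤ norm1 u :=
  Finset.sum_nonneg fun i _ => abs_nonneg _

lemma one_le_norm1 {n : ℕ} {u : Fin n → ℤ} (hu : u ≠ 0) : 1 ≤ norm1 u := by
  obtain ⟨j, hj⟩ := Function.ne_iff.mp hu
  have h1 : |u j| ≤ norm1 u :=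
    Finset.single_le_sum (fun i _ => abs_nonneg (u i)) (Finset.mem_univ j)
  have hj' : u j ≠ 0 := by simpa using hj
  have : 1 ≤ |u j| := Int.one_le_abs (by simpa using hj')
  omega

def KerOn {k n : ℕ} (A : Matrix (Fin k) (Fin n) ℤ) (K : Finset (Fin k)) (u : Fin n → ℤ) : Prop :=
  ∀ i ∈ K, A.mulVec u i = 0

def GravOn {k n : ℕ} (A : Matrix (Fin k) (Fin n) ℤ) (K : Finset (Fin k)) (u : Fin n → ℤ) : Prop :=
  u ≠ 0 ∧ KerOn A K u ∧ ∀ v, v ≠ 0 → KerOn A K v → ConformalLE v u → v = u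

lemma conf_norm1_lt {n : ℕ} {v u : Fin n → ℤ} (hc : ConformalLE v u) (hne : v ≠ u) :
    norm1 v < norm1 u := by
  have hle : ∀ i, |v i| ≤ |u i| := hc.2
  by_cases hstrict : ∀ i, |v i| = |u i|
  · exact absurd (funext fun i => aux_conf_eq _ _ (hc.1 i) (hstrict i)) hne
  · push_neg at hstrict
    obtain ⟨i, hi⟩ := hstrict
    have : |v i| < |u i| := lt_of_le_of_ne (hle i) hi
    have := Finset.sum_lt_sum (fun j _ => hle j) ⟨i, Finset.mem_univ i, this⟩
    exact this

lemma exists_graver_below {k n : ℕ} (A : Matrix (Fin k) (Fin n) ℤ) (K : Finset (Fin k)) :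
    ∀ N : ℕ, ∀ u : Fin n → ℤ, norm1 u ≤ N → u ≠ 0 → KerOn A K u →
      ∃ v, GravOn A K v ∧ ConformalLE v u := by
  intro N
  induction N with
  | zero => intro u hN hu _; exact absurd (one_le_norm1 hu) (by omega)
  | succ N ih =>
    intro u hN hu hker
    by_cases hmin : ∀ v, v ≠ 0 → KerOn A K v → ConformalLE v u → v = u
    · exact ⟨u, ⟨hu, hker, hmin⟩, ⟨fun i => mul_self_nonneg _, fun i => le_refl _⟩⟩
    · push_neg at hmin
      obtain ⟨v, hv0, hvk, hvc, hvne⟩ := hmin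
      have hlt := conf_norm1_lt hvc hvne
      obtain ⟨w, hw, hwc⟩ := ih v (by omega) hv0 hvk
      exact ⟨w, hw, conformalLE_trans hwc hvc⟩

-- conformal decomposition into GravOn elements
lemma graver_decomp {k n : ℕ} (A : Matrix (Fin k) (Fin n) ℤ) (K : Finset (Fin k)) :
    ∀ N : ℕ, ∀ u : Fin n → ℤ, norm1 u ≤ N → KerOn A K u →
      ∃ L : List (Fin n → ℤ), L.sum = u ∧ (∀ v ∈ L, GravOn A K v) ∧
        (∀ v ∈ L, ∀ i, 0 ≤ v i * u i) ∧
        (∀ i, (L.map (fun v => |v i|)).sum = |u i|) := by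
  intro N
  induction N with
  | zero =>
    intro u hN _
    have hu : u = 0 := by
      by_contra h
      exact absurd (one_le_norm1 h) (by omega)
    exact ⟨[], by simp [hu], by simp, by simp, by simp [hu]⟩
  | succ N ih =>
    intro u hN hker
    by_cases hu : u = 0
    · exact ⟨[], by simp [hu], by simp, by simp, by simp [hu]⟩
    · obtain ⟨v, hv, hvc⟩ := exists_graver_below A K (N + 1) u hN hu hker
      set w : Fin n → ℤ := u - v with hw
      have hsub : ∀ i, 0 ≤ w i * u i ∧ |w i| = |u i| - |v i| := by
        intro i
        exact aux_sub_conf (v i) (u i) (hvc.1 i) (hvc.2 i)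
      have hwker : KerOn A K w := by
        intro i hi
        rw [hw, Matrix.mulVec_sub]
        simp [hker i hi, hv.2.1 i hi]
      have hnw : norm1 w = norm1 u - norm1 v := by
        unfold norm1
        rw [← Finset.sum_sub_distrib]
        exact Finset.sum_congr rfl fun i _ => (hsub i).2
      have hv1 := one_le_norm1 hv.1
      obtain ⟨L, hLs, hLg, hLsign, hLabs⟩ := ih w (by omega) hwker
      refine ⟨v :: L, ?_, ?_, ?_, ?_⟩
      · simp [hLs, hw]
      · intro x hx
        rcases List.mem_cons.mp hx with rfl | hx
        · exact hv
        · exact hLg x hx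
      · intro x hx i
        rcases List.mem_cons.mp hx with rfl | hx
        · exact hvc.1 i
        · -- x compat w, w compat u, |x i| ≤ |w i|
          have h1 := hLsign x hx i
          have h2 : |x i| ≤ |w i| := by
            rw [← hLabs i]
            exact List.single_le_sum
              (by intro y hy; simp at hy; obtain ⟨a, _, rfl⟩ := hy; exact abs_nonneg _) _
              (List.mem_map_of_mem hx)
          exact aux_sign_chain _ _ _ h1 (hsub i).1 h2
      · intro i
        simp only [List.map_cons, List.sum_cons, hLabs i]
        have := (hsub i).2
        omega

lemma aux_exists_neg {α : Type*} (f : α → ℤ) (l : List α) (h : (l.map f).sum < 0) :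
    ∃ x ∈ l, f x < 0 := by
  by_contra hc
  push_neg at hc
  have : 0 ≤ (l.map f).sum :=
    List.sum_nonneg (by intro y hy; simp at hy; obtain ⟨a, ha, rfl⟩ := hy; exact hc a ha)
  omega

lemma aux_exists_pos {α : Type*} (f : α → ℤ) (l : List α) (h : 0 < (l.map f).sum) :
    ∃ x ∈ l, 0 < f x := by
  by_contra hc
  push_neg at hc
  have key : ∀ l' : List ℤ, (∀ x ∈ l', x ≤ 0) → l'.sum ≤ 0 := by
    intro l'
    induction l' with
    | nil => simp
    | cons a t iht =>
      intro hh
      have := hh a (by simp)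
      have := iht (fun x hx => hh x (by simp [hx]))
      simp only [List.sum_cons]
      omega
  have : (l.map f).sum ≤ 0 :=
    key _ (by intro y hy; simp at hy; obtain ⟨a, ha, rfl⟩ := hy; exact hc a ha)
  omega

lemma steinitz_1d {α : Type*} [DecidableEq α] (f : α → ℤ) (B : ℤ) :
    ∀ m : ℕ, ∀ l : List α, l.length = m → (∀ x ∈ l, |f x| ≤ B) →
    ∀ s : ℤ, |s| ≤ B → s + (l.map f).sum = 0 →
      ∃ l' : List α, l'.Perm l ∧ ∀ p, |s + ((l'.take p).map f).sum| ≤ B := by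
  intro m
  induction m with
  | zero =>
    intro l hl _ s hs _
    rw [List.length_eq_zero_iff] at hl
    subst hl
    exact ⟨[], List.Perm.refl _, fun p => by simpa using hs⟩
  | succ m ih =>
    intro l hl hB s hs hsum
    have hlne : l ≠ [] := by intro h; subst h; simp at hl
    -- choose an element x with |s + f x| ≤ B
    have hex : ∃ x ∈ l, |s + f x| ≤ B := by
      rcases lt_trichotomy s 0 with h0 | h0 | h0
      · have : 0 < (l.map f).sum := by omega
        obtain ⟨x, hx, hfx⟩ := aux_exists_pos f l this
        exact ⟨x, hx, by have := hB x hx; rw [abs_le] at *; omega⟩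
      · obtain ⟨x, hx⟩ := List.exists_mem_of_ne_nil l hlne
        exact ⟨x, hx, by subst h0; simpa using hB x hx⟩
      · have : (l.map f).sum < 0 := by omega
        obtain ⟨x, hx, hfx⟩ := aux_exists_neg f l this
        exact ⟨x, hx, by have := hB x hx; rw [abs_le] at *; omega⟩
    obtain ⟨x, hx, hsx⟩ := hex
    have hperm := List.perm_cons_erase hx
    have hlen : (l.erase x).length = m := by
      have := List.length_erase_of_mem hx
      omega
    have hBsub : ∀ y ∈ l.erase x, |f y| ≤ B := fun y hy => hB y (List.mem_of_mem_erase hy)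
    have hsum' : (s + f x) + ((l.erase x).map f).sum = 0 := by
      have : ((x :: l.erase x).map f).sum = (l.map f).sum := (hperm.map f).symm.sum_eq
      simp only [List.map_cons, List.sum_cons] at this
      omega
    obtain ⟨l'', hl''p, hl''⟩ := ih (l.erase x) hlen hBsub (s + f x) hsx hsum'
    refine ⟨x :: l'', (hl''p.cons x).trans hperm.symm, ?_⟩
    intro p
    cases p with
    | zero => simpa using hs
    | succ p =>
      have := hl'' p
      simp only [List.take_succ_cons, List.map_cons, List.sum_cons]
      rw [show s + (f x + ((l''.take p).map f).sum) = (s + f x) + ((l''.take p).map f).sum by ring]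
      exact this

lemma list_sum_apply {n : ℕ} (L : List (Fin n → ℤ)) (i : Fin n) :
    L.sum i = (L.map (fun v => v i)).sum := by
  induction L with
  | nil => simp
  | cons a t ih => simp [ih]

lemma list_sum_mulVec {k n : ℕ} (A : Matrix (Fin k) (Fin n) ℤ) (L : List (Fin n → ℤ)) (r : Fin k) :
    A.mulVec L.sum r = (L.map (fun v => A.mulVec v r)).sum := by
  induction L with
  | nil => simp
  | cons a t ih => simp [Matrix.mulVec_add, ih]

lemma list_norm1_sum {n : ℕ} (L : List (Fin n → ℤ)) :
    ∑ i, (L.map (fun v => |v i|)).sum = (L.map norm1).sum := by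
  induction L with
  | nil => simp
  | cons a t ih =>
    simp only [List.map_cons, List.sum_cons, Finset.sum_add_distrib, ih]
    rfl

lemma dot_bound {k n : ℕ} (A : Matrix (Fin k) (Fin n) ℤ) (M : ℕ)
    (hA : ∀ i j, |A i j| ≤ (M : ℤ)) (r : Fin k) (v : Fin n → ℤ) :
    |A.mulVec v r| ≤ (M : ℤ) * norm1 v := by
  unfold Matrix.mulVec dotProduct
  calc |∑ j, A r j * v j| ≤ ∑ j, |A r j * v j| := Finset.abs_sum_le_sum_abs _ _
    _ ≤ ∑ j, (M : ℤ) * |v j| := by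
        apply Finset.sum_le_sum
        intro j _
        rw [abs_mul]
        exact mul_le_mul_of_nonneg_right (hA r j) (abs_nonneg _)
    _ = (M : ℤ) * norm1 v := by rw [norm1, Finset.mul_sum]

-- least element of a finite chain
lemma chain_least {k : ℕ} (le : Fin k → Fin k → Prop)
    (hrefl : ∀ v, le v v) (htrans : ∀ a b c, le a b → le b c → le a c) :
    ∀ D : Finset (Fin k), D.Nonempty → (∀ a ∈ D, ∀ b ∈ D, le a b ∨ le b a) →
      ∃ r ∈ D, ∀ i ∈ D, le r i := by
  intro D
  induction D using Finset.induction_on with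
  | empty => intro h; exact absurd h (by simp)
  | @insert a D hnotmem ihD =>
    intro _ hchain
    by_cases hD : D.Nonempty
    · obtain ⟨r, hrD, hr⟩ := ihD hD (fun x hx y hy =>
        hchain x (Finset.mem_insert_of_mem hx) y (Finset.mem_insert_of_mem hy))
      rcases hchain a (Finset.mem_insert_self a D) r (Finset.mem_insert_of_mem hrD) with h | h
      · refine ⟨a, Finset.mem_insert_self a D, ?_⟩
        intro i hi
        rcases Finset.mem_insert.mp hi with heq | hi
        · cases heq; exact hrefl _
        · exact htrans a r i h (hr i hi)
      · refine ⟨r, Finset.mem_insert_of_mem hrD, ?_⟩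
        intro i hi
        rcases Finset.mem_insert.mp hi with heq | hi
        · cases heq; exact h
        · exact hr i hi
    · rw [Finset.not_nonempty_iff_eq_empty] at hD
      subst hD
      refine ⟨a, by simp, ?_⟩
      intro i hi
      simp at hi
      cases hi
      exact hrefl _

lemma list_sum_le_len (g : ℤ) : ∀ l : List ℤ, (∀ x ∈ l, x ≤ g) → l.sum ≤ (l.length : ℤ) * g := by
  intro l
  induction l with
  | nil => simp
  | cons a t ih =>
    intro h
    have ha := h a (by simp)
    have ht := ih (fun x hx => h x (by simp [hx]))
    simp only [List.sum_cons, List.length_cons]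
    push_cast
    nlinarith

lemma key_lemma {k n : ℕ} (A : Matrix (Fin k) (Fin n) ℤ) (M : ℕ)
    (hA : ∀ i j, |A i j| ≤ (M : ℤ))
    (le : Fin k → Fin k → Prop)
    (hrefl : ∀ v, le v v)
    (htrans : ∀ a b c, le a b → le b c → le a c)
    (hanti : ∀ a b, le a b → le b a → a = b)
    (hdown : ∀ a b c, le a c → le b c → le a b ∨ le b a)
    (hedge : ∀ a b j, a ≠ b → A a j ≠ 0 → A b j ≠ 0 → le a b ∨ le b a) :
    ∀ m : ℕ, ∀ K : Finset (Fin k), K.card = m → ∀ h : ℕ,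
      (∀ s : Finset (Fin k), s ⊆ K → (∀ a ∈ s, ∀ b ∈ s, le a b ∨ le b a) → s.card ≤ h) →
      ∀ u, GravOn A K u → norm1 u ≤ ((2 * M + 1 : ℕ) : ℤ) ^ (2 ^ h - 1) := by
  classical
  intro m
  induction m using Nat.strong_induction_on with
  | _ m ihm =>
  intro K hK h hheight u hu
  obtain ⟨hu0, huker, humin⟩ := hu
  obtain ⟨j0, hj0⟩ := Function.ne_iff.mp hu0
  have hj0 : u j0 ≠ 0 := by simpa using hj0
  set c : ℤ := ((2 * M + 1 : ℕ) : ℤ) with hc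
  have hc1 : (1 : ℤ) ≤ c := by rw [hc]; push_cast; omega
  have hRHS1 : ∀ e : ℕ, (1 : ℤ) ≤ c ^ e := fun e => one_le_pow₀ hc1
  by_cases hcaseA : ∃ j, u j ≠ 0 ∧ ∀ i ∈ K, A i j = 0
  · -- u is (plus/minus) a unit vector
    obtain ⟨j, hj, hAj⟩ := hcaseA
    set v : Fin n → ℤ := fun j' => if j' = j then (if 0 < u j then 1 else -1) else 0 with hv
    have hvj : v j = if 0 < u j then 1 else -1 := by simp [hv]
    have hv0 : v ≠ 0 := by
      intro hzz
      have := congrFun hzz j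
      rw [hvj] at this
      by_cases h' : 0 < u j <;> simp [h'] at this
    have hvker : KerOn A K v := by
      intro i hi
      unfold Matrix.mulVec dotProduct
      apply Finset.sum_eq_zero
      intro j' _
      by_cases hj' : j' = j
      · subst hj'; simp [hAj i hi]
      · simp [hv, hj']
    have hvc : ConformalLE v u := by
      constructor
      · intro i
        by_cases hi : i = j
        · rw [hi, hvj]
          by_cases h' : 0 < u j <;> simp [h'] <;> omega
        · simp [hv, hi]
      · intro i
        by_cases hi : i = j
        · rw [hi, hvj]
          have h1 : 1 ≤ |u j| := Int.one_le_abs hj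
          by_cases h' : 0 < u j <;> simp [h'] <;> omega
        · simp [hv, hi, abs_nonneg]
    have hvu := humin v hv0 hvker hvc
    rw [← hvu]
    have : norm1 v = 1 := by
      unfold norm1
      rw [Finset.sum_eq_single j]
      · rw [hvj]; by_cases h' : 0 < u j <;> simp [h']
      · intro b _ hb; simp [hv, hb]
      · intro hj'; exact absurd (Finset.mem_univ j) hj'
    rw [this]
    exact hRHS1 _
  · push_neg at hcaseA
    -- every column in the support of u has a nonzero entry in some row of K
    obtain ⟨i0, hi0K, hi0⟩ := hcaseA j0 hj0
    have hh1 : 1 ≤ h := by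
      have := hheight {i0} (by simpa using hi0K)
        (by intro a ha b hb; simp at ha hb; subst ha; subst hb; exact Or.inl (hrefl _))
      simpa using this
    obtain ⟨h', rfl⟩ : ∃ h', h = h' + 1 := ⟨h - 1, by omega⟩
    -- least element r of the down-set of i0 within K
    set D := K.filter (fun i => le i i0) with hD
    have hi0D : i0 ∈ D := by rw [hD]; exact Finset.mem_filter.mpr ⟨hi0K, hrefl i0⟩
    obtain ⟨r, hrD, hrleast⟩ := chain_least le hrefl htrans D ⟨i0, hi0D⟩
      (fun a ha b hb =>
        hdown a b i0 (Finset.mem_filter.mp ha).2 (Finset.mem_filter.mp hb).2)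
    have hrK : r ∈ K := (Finset.mem_filter.mp hrD).1
    have hri0 : le r i0 := hrleast i0 hi0D
    have hrmin : ∀ i ∈ K, le i r → i = r := by
      intro i hi hir
      have hii0 : le i i0 := htrans _ _ _ hir (Finset.mem_filter.mp hrD).2
      exact hanti i r hir (hrleast i (Finset.mem_filter.mpr ⟨hi, hii0⟩))
    have hclosed : ∀ i ∈ K, ∀ i' ∈ K, le r i → (le i' i ∨ le i i') → le r i' := by
      intro i hi i' hi'K hri hcomp
      rcases hcomp with hcc | hcc
      · rcases hdown r i' i hri hcc with h1 | h1
        · exact h1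
        · have heq := hrmin i' hi'K h1
          rw [heq]
          exact hrefl r
      · exact htrans r i i' hri hcc
    -- columns whose K-support lies in the tree above r
    set cond : Fin n → Prop := fun j => ∀ i ∈ K, A i j ≠ 0 → le r i with hcond
    have hcondj0 : cond j0 := by
      intro i hi hAij0
      by_cases hii0 : i = i0
      · rw [hii0]; exact hri0
      · exact hclosed i0 hi0K i hi hri0 (hedge i i0 j0 hii0 hAij0 hi0)
    -- vectors supported on cond columns are killed by rows outside the tree
    have hcondker : ∀ x : Fin n → ℤ, (∀ j, ¬ cond j → x j = 0) →
        ∀ i ∈ K, ¬ le r i → A.mulVec x i = 0 := by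
      intro x hx i hi hnri
      unfold Matrix.mulVec dotProduct
      apply Finset.sum_eq_zero
      intro j _
      by_cases hcj : cond j
      · have : A i j = 0 := by
          by_contra hne
          exact hnri (hcj i hi hne)
        simp [this]
      · simp [hx j hcj]
    -- the support of u is contained in cond columns
    have hsupp : ∀ j, u j ≠ 0 → cond j := by
      set uT : Fin n → ℤ := fun j => if cond j then u j else 0 with huT
      have huT0 : uT ≠ 0 := by
        intro hz
        have := congrFun hz j0
        simp only [huT, if_pos hcondj0] at this
        exact hj0 this
      have huTsupp : ∀ j, ¬ cond j → uT j = 0 := by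
        intro j hcj; simp only [huT, if_neg hcj]
      have hnotcond : ∀ (j : Fin n) (i : Fin k), i ∈ K → le r i → ¬ cond j → A i j = 0 := by
        intro j i hi hri hcj
        by_contra hne
        have hcj2 : ¬ ∀ i' ∈ K, A i' j ≠ 0 → le r i' := hcj
        push_neg at hcj2
        obtain ⟨i', hi'K, hi'A, hi'nr⟩ := hcj2
        by_cases hii' : i' = i
        · rw [hii'] at hi'nr; exact hi'nr hri
        · exact hi'nr (hclosed i hi i' hi'K hri (hedge i' i j hii' hi'A hne))
      have hucker : ∀ i ∈ K, A.mulVec (u - uT) i = 0 := by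
        intro i hi
        by_cases hri : le r i
        · unfold Matrix.mulVec dotProduct
          apply Finset.sum_eq_zero
          intro j _
          by_cases hcj : cond j
          · have hz : (u - uT) j = 0 := by
              simp only [Pi.sub_apply, huT, if_pos hcj]; ring
            simp [hz]
          · simp [hnotcond j i hi hri hcj]
        · have h1 : A.mulVec uT i = 0 := hcondker uT huTsupp i hi hri
          rw [Matrix.mulVec_sub]
          simp [Pi.sub_apply, huker i hi, h1]
      have huTker : KerOn A K uT := by
        intro i hi
        have h2 := hucker i hi
        rw [Matrix.mulVec_sub] at h2
        have h3 : A.mulVec u i - A.mulVec uT i = 0 := h2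
        rw [huker i hi] at h3
        omega
      have huTc : ConformalLE uT u := by
        constructor
        · intro i
          by_cases hci : cond i
          · simp only [huT, if_pos hci]; exact mul_self_nonneg _
          · simp only [huT, if_neg hci, zero_mul]; exact le_refl 0
        · intro i
          by_cases hci : cond i
          · simp only [huT, if_pos hci]; exact le_refl _
          · simp only [huT, if_neg hci, abs_zero]; exact abs_nonneg _
      have huTu := humin uT huT0 huTker huTc
      intro j hj
      by_contra hcj
      have : uT j = 0 := huTsupp j hcj
      rw [huTu] at this
      exact hj this
    -- the sub-tree row set
    set K2 : Finset (Fin k) := (K.filter (fun i => le r i)).erase r with hK2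
    have hK2sub : K2 ⊆ K := by
      intro i hi
      exact (Finset.mem_filter.mp (Finset.mem_of_mem_erase hi)).1
    have hK2mem : ∀ i, i ∈ K2 ↔ (i ∈ K ∧ le r i ∧ i ≠ r) := by
      intro i
      rw [hK2, Finset.mem_erase, Finset.mem_filter]
      tauto
    have hrfilter : r ∈ K.filter (fun i => le r i) := Finset.mem_filter.mpr ⟨hrK, hrefl r⟩
    have hK2card : K2.card < m := by
      rw [hK2, Finset.card_erase_of_mem hrfilter]
      have h1 := Finset.card_filter_le K (fun i => le r i)
      have h2 : 0 < (K.filter (fun i => le r i)).card := Finset.card_pos.mpr ⟨r, hrfilter⟩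
      omega
    have hK2height : ∀ s : Finset (Fin k), s ⊆ K2 →
        (∀ a ∈ s, ∀ b ∈ s, le a b ∨ le b a) → s.card ≤ h' := by
      intro s hs hchain
      have hrns : r ∉ s := fun hrs => (Finset.mem_erase.mp (hs hrs)).1 rfl
      have hins : insert r s ⊆ K := by
        intro i hi
        rcases Finset.mem_insert.mp hi with heq | hi
        · rw [heq]; exact hrK
        · exact hK2sub (hs hi)
      have hchain' : ∀ a ∈ insert r s, ∀ b ∈ insert r s, le a b ∨ le b a := by
        intro a ha b hb
        rcases Finset.mem_insert.mp ha with ha' | ha' <;>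
          rcases Finset.mem_insert.mp hb with hb' | hb'
        · rw [ha', hb']; exact Or.inl (hrefl r)
        · rw [ha']; exact Or.inl ((hK2mem b).mp (hs hb')).2.1
        · rw [hb']; exact Or.inr ((hK2mem a).mp (hs ha')).2.1
        · exact hchain a ha' b hb'
      have := hheight (insert r s) hins hchain'
      rw [Finset.card_insert_of_notMem hrns] at this
      omega
    -- decompose u into Graver elements of the smaller system
    set g : ℤ := c ^ (2 ^ h' - 1) with hg
    have hg1 : 1 ≤ g := hRHS1 _
    have huker2 : KerOn A K2 u := fun i hi => huker i (hK2sub hi)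
    obtain ⟨L, hLsum, hLg, hLsign, hLabs⟩ := graver_decomp A K2 (norm1 u).toNat u
      (by rw [Int.toNat_of_nonneg (norm1_nonneg u)]) huker2
    have hvnorm : ∀ v ∈ L, norm1 v ≤ g := by
      intro v hv
      exact ihm K2.card (by omega) K2 rfl h' hK2height v (hLg v hv)
    have habs_le : ∀ v ∈ L, ∀ i, |v i| ≤ |u i| := by
      intro v hv i
      rw [← hLabs i]
      exact List.single_le_sum
        (by intro y hy; simp at hy; obtain ⟨a, _, rfl⟩ := hy; exact abs_nonneg _) _
        (List.mem_map_of_mem hv)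
    have hmemsupp : ∀ v ∈ L, ∀ j, ¬ cond j → v j = 0 := by
      intro v hv j hcj
      have h1 : u j = 0 := by
        by_contra hne
        exact hcj (hsupp j hne)
      have h2 := habs_le v hv j
      rw [h1, abs_zero] at h2
      exact abs_eq_zero.mp (le_antisymm h2 (abs_nonneg _))
    -- reorder so partial sums of the r-row values stay bounded
    set f : (Fin n → ℤ) → ℤ := fun v => A.mulVec v r with hf
    set B : ℤ := (M : ℤ) * g with hB
    have hB0 : 0 ≤ B := mul_nonneg (by positivity) (by omega)
    have hfb : ∀ v ∈ L, |f v| ≤ B := by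
      intro v hv
      calc |f v| ≤ (M : ℤ) * norm1 v := dot_bound A M hA r v
        _ ≤ B := by
            rw [hB]
            exact mul_le_mul_of_nonneg_left (hvnorm v hv) (by positivity)
    have htotal : (L.map f).sum = 0 := by
      rw [hf, ← list_sum_mulVec, hLsum]
      exact huker r hrK
    obtain ⟨l', hperm, hpre⟩ := steinitz_1d f B L.length L rfl hfb 0 (by simpa using hB0)
      (by rw [htotal]; ring)
    have hpre' : ∀ p, |((l'.take p).map f).sum| ≤ B := by
      intro p
      have := hpre p
      rwa [zero_add] at this
    have hmem' : ∀ v ∈ l', v ∈ L := fun v hv => hperm.subset hv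
    have hlen' : l'.length = L.length := hperm.length_eq
    -- per-coordinate abs sums over l'
    have habs' : ∀ i, (l'.map (fun v => |v i|)).sum = |u i| := by
      intro i
      rw [← hLabs i]
      exact (hperm.map _).sum_eq
    -- block machinery: sums of parts of l' are conformally below u
    have hblock : ∀ Bl : List (Fin n → ℤ), (∀ v ∈ Bl, v ∈ L) →
        (∀ i : Fin n, (Bl.map (fun v => |v i|)).sum ≤ |u i|) →
        ConformalLE Bl.sum u ∧ norm1 Bl.sum = (Bl.map norm1).sum := by
      intro Bl hmem hbd
      have hcoord : ∀ i, 0 ≤ Bl.sum i * u i ∧ |Bl.sum i| = (Bl.map (fun v => |v i|)).sum := by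
        intro i
        have h1 : ∀ x ∈ Bl.map (fun v => v i), 0 ≤ x * u i := by
          intro x hx
          simp only [List.mem_map] at hx
          obtain ⟨v, hv, rfl⟩ := hx
          exact hLsign v (hmem v hv) i
        have h2 : ((Bl.map (fun v => v i)).map (fun x => |x|)).sum ≤ |u i| := by
          rw [List.map_map]
          exact hbd i
        have := aux_list_sign (u i) (Bl.map (fun v => v i)) h1 h2
        rw [list_sum_apply]
        rw [List.map_map] at this
        exact this
      constructor
      · exact ⟨fun i => (hcoord i).1, fun i => (hcoord i).2 ▸ hbd i⟩
      · have h1 : ∑ i, |Bl.sum i| = ∑ i, (Bl.map (fun v => |v i|)).sum :=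
          Finset.sum_congr rfl fun i _ => (hcoord i).2
        exact h1.trans (list_norm1_sum Bl)
    have hpos : ∀ Bl : List (Fin n → ℤ), Bl ≠ [] → (∀ v ∈ Bl, v ∈ L) →
        1 ≤ (Bl.map norm1).sum := by
      intro Bl hne hmem
      obtain ⟨x, hx⟩ := List.exists_mem_of_ne_nil Bl hne
      have h1 : 1 ≤ norm1 x := one_le_norm1 (hLg x (hmem x hx)).1
      have h2 : norm1 x ≤ (Bl.map norm1).sum :=
        List.single_le_sum
          (by intro y hy; simp at hy; obtain ⟨a, ha, rfl⟩ := hy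
              exact norm1_nonneg a) _ (List.mem_map_of_mem hx)
      omega
    -- two equal partial sums would contradict conformal minimality of u
    have hcontr : ∀ p q : ℕ, p < q → q < l'.length →
        ((l'.take p).map f).sum = ((l'.take q).map f).sum → False := by
      intro p q hplt hqlt heqs
      set P : List (Fin n → ℤ) := l'.take p with hP
      set Bk : List (Fin n → ℤ) := (l'.drop p).take (q - p) with hBk
      set R : List (Fin n → ℤ) := l'.drop q with hR
      have htq : l'.take q = P ++ Bk := by
        rw [hP, hBk, ← List.take_add, show p + (q - p) = q by omega]
      have hsplitl : l' = P ++ Bk ++ R := by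
        rw [← htq, hR]
        exact (List.take_append_drop q l').symm
      have hBkmem : ∀ v ∈ Bk, v ∈ L := by
        intro v hv
        apply hmem'
        rw [hsplitl]
        exact List.mem_append.mpr (Or.inl (List.mem_append.mpr (Or.inr hv)))
      have hPRmem : ∀ v ∈ P ++ R, v ∈ L := by
        intro v hv
        apply hmem'
        rw [hsplitl]
        rcases List.mem_append.mp hv with h1 | h1
        · exact List.mem_append.mpr (Or.inl (List.mem_append.mpr (Or.inl h1)))
        · exact List.mem_append.mpr (Or.inr h1)
      have hBkne : Bk ≠ [] := by
        have : Bk.length = min (q - p) (l'.length - p) := by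
          rw [hBk, List.length_take, List.length_drop]
        intro hnil
        rw [hnil] at this
        simp at this
        omega
      have hPRne : P ++ R ≠ [] := by
        have hRlen : R.length = l'.length - q := by rw [hR, List.length_drop]
        intro hnil
        have hlen0 := congrArg List.length hnil
        rw [List.length_append] at hlen0
        simp only [List.length_nil] at hlen0
        omega
      -- abs sums split
      have hsplitabs : ∀ i : Fin n,
          (P.map (fun v => |v i|)).sum + (Bk.map (fun v => |v i|)).sum
            + (R.map (fun v => |v i|)).sum = |u i| := by
        intro i
        have := habs' i
        rw [hsplitl, List.map_append, List.map_append, List.sum_append, List.sum_append] at this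
        linarith
      have habsnn : ∀ (Bl : List (Fin n → ℤ)) (i : Fin n),
          0 ≤ (Bl.map (fun v => |v i|)).sum := by
        intro Bl i
        apply List.sum_nonneg
        intro x hx
        simp only [List.mem_map] at hx
        obtain ⟨v, _, rfl⟩ := hx
        exact abs_nonneg _
      have hBkbd : ∀ i : Fin n, (Bk.map (fun v => |v i|)).sum ≤ |u i| := by
        intro i
        have := hsplitabs i
        have h1 := habsnn P i
        have h2 := habsnn R i
        linarith
      have hPRbd : ∀ i : Fin n, ((P ++ R).map (fun v => |v i|)).sum ≤ |u i| := by
        intro i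
        rw [List.map_append, List.sum_append]
        have := hsplitabs i
        have h1 := habsnn Bk i
        linarith
      obtain ⟨hv'conf, hv'norm⟩ := hblock Bk hBkmem hBkbd
      have hv'pos : 1 ≤ norm1 Bk.sum := by
        rw [hv'norm]
        exact hpos Bk hBkne hBkmem
      have hv'ne : Bk.sum ≠ 0 := by
        intro hz
        rw [hz] at hv'pos
        simp [norm1] at hv'pos
      have hv'ker : KerOn A K Bk.sum := by
        intro i hi
        by_cases hri : le r i
        · by_cases hir : i = r
          · subst hir
            have hsum0 : (Bk.map f).sum = 0 := by
              have := heqs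
              rw [htq, List.map_append, List.sum_append] at this
              omega
            rw [list_sum_mulVec]
            exact hsum0
          · have hiK2 : i ∈ K2 := (hK2mem i).mpr ⟨hi, hri, hir⟩
            rw [list_sum_mulVec]
            apply List.sum_eq_zero
            intro x hx
            simp only [List.mem_map] at hx
            obtain ⟨v, hv, rfl⟩ := hx
            exact (hLg v (hBkmem v hv)).2.1 i hiK2
        · apply hcondker Bk.sum _ i hi hri
          intro j hcj
          rw [list_sum_apply]
          apply List.sum_eq_zero
          intro x hx
          simp only [List.mem_map] at hx
          obtain ⟨v, hv, rfl⟩ := hx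
          exact hmemsupp v (hBkmem v hv) j hcj
      have hvu := humin Bk.sum hv'ne hv'ker hv'conf
      -- the complement is then zero but nonempty
      have hl'sum : P.sum + Bk.sum + R.sum = u := by
        have h1 : l'.sum = u := hperm.sum_eq.trans hLsum
        rw [hsplitl] at h1
        rw [List.sum_append, List.sum_append] at h1
        exact h1
      have h0 : (P ++ R).sum = 0 := by
        rw [List.sum_append]
        have h2 := hl'sum
        rw [hvu] at h2
        have h3 : P.sum + R.sum + u = 0 + u := by linear_combination h2
        exact add_right_cancel h3
      obtain ⟨_, hPRnorm⟩ := hblock (P ++ R) hPRmem hPRbd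
      have hPRpos : 1 ≤ norm1 (P ++ R).sum := by
        rw [hPRnorm]
        exact hpos (P ++ R) hPRne hPRmem
      rw [h0] at hPRpos
      simp [norm1] at hPRpos
    -- the number of pieces is at most 2B + 1
    have hNle : (l'.length : ℤ) ≤ 2 * B + 1 := by
      by_contra hNgt
      push_neg at hNgt
      have hmaps : ∀ p ∈ Finset.range l'.length,
          ((l'.take p).map f).sum ∈ Finset.Icc (-B) B := by
        intro p _
        rw [Finset.mem_Icc, ← abs_le]
        exact hpre' p
      have hcard : (Finset.Icc (-B) B).card < (Finset.range l'.length).card := by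
        rw [Int.card_Icc, Finset.card_range]
        omega
      obtain ⟨p, hp, q, hq, hpq, heq⟩ :=
        Finset.exists_ne_map_eq_of_card_lt_of_maps_to hcard hmaps
      rw [Finset.mem_range] at hp hq
      rcases hpq.lt_or_gt with hlt | hlt
      · exact hcontr p q hlt hq heq
      · exact hcontr q p hlt hp heq.symm
    -- final arithmetic
    have hnu : norm1 u = (L.map norm1).sum := by
      have h1 : ∑ i, |u i| = ∑ i, (L.map (fun v => |v i|)).sum :=
        Finset.sum_congr rfl fun i _ => (hLabs i).symm
      exact h1.trans (list_norm1_sum L)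
    have hlenL : ((L.length : ℤ)) ≤ 2 * B + 1 := by
      rw [← hlen']; exact hNle
    have hsum_le : (L.map norm1).sum ≤ (L.length : ℤ) * g := by
      have := list_sum_le_len g (L.map norm1) (by
        intro x hx
        simp only [List.mem_map] at hx
        obtain ⟨v, hv, rfl⟩ := hx
        exact hvnorm v hv)
      rwa [List.length_map] at this
    have hg0 : (0:ℤ) ≤ g := by omega
    have hpow : (c * g) * g = c ^ (2 ^ (h' + 1) - 1) := by
      have h2 : 2 ^ (h' + 1) = 2 ^ h' + 2 ^ h' := by rw [pow_succ]; ring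
      have h3 : 1 ≤ 2 ^ h' := Nat.one_le_two_pow
      have he : 2 ^ (h' + 1) - 1 = (2 ^ h' - 1) + (2 ^ h' - 1) + 1 := by omega
      rw [he, pow_add, pow_add, pow_one, hg]
      ring
    calc norm1 u = (L.map norm1).sum := hnu
      _ ≤ (L.length : ℤ) * g := hsum_le
      _ ≤ (2 * B + 1) * g := mul_le_mul_of_nonneg_right hlenL hg0
      _ = (2 * (M : ℤ) * g + 1) * g := by rw [hB]; ring
      _ ≤ (c * g) * g := by
          have hcg : 2 * (M : ℤ) * g + 1 ≤ c * g := by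
            rw [hc]; push_cast; nlinarith
          exact mul_le_mul_of_nonneg_right hcg hg0
      _ = c ^ (2 ^ (h' + 1) - 1) := hpow


/-- for every integer matrix A,
g₁(A) ≤ (2‖A‖_∞ + 1)^(2^{td_D(A)} − 1). -/
theorem graver_bound_dual_treedepth (k n : ℕ) (A : Matrix (Fin k) (Fin n) ℤ) :
    ∀ u ∈ GraverBasis A,
      ∑ i, |u i| ≤
        ((2 * (Finset.univ.sup fun p : Fin k × Fin n => (A p.1 p.2).natAbs) + 1 : ℕ) : ℤ) ^
          (2 ^ treedepth (dualGraph A) - 1) := by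
  classical
  intro u hu
  set M : ℕ := Finset.univ.sup fun p : Fin k × Fin n => (A p.1 p.2).natAbs with hM
  have hA : ∀ i j, |A i j| ≤ (M : ℤ) := by
    intro i j
    have h1 : (A i j).natAbs ≤ M := by
      rw [hM]
      exact Finset.le_sup (f := fun p : Fin k × Fin n => (A p.1 p.2).natAbs)
        (Finset.mem_univ (i, j))
    rw [Int.abs_eq_natAbs]
    exact_mod_cast h1
  have hk : TreedepthLE (dualGraph A) k := by
    refine ⟨(· ≤ ·), fun v => le_refl v, fun a b c => le_trans, fun a b => le_antisymm,
      fun a b c _ _ => le_total a b, fun a b _ => le_total a b, ?_⟩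
    intro s _
    calc s.card ≤ (Finset.univ : Finset (Fin k)).card := Finset.card_le_univ s
      _ = k := by simp
  have hmem : TreedepthLE (dualGraph A) (treedepth (dualGraph A)) :=
    Nat.sInf_mem (⟨k, hk⟩ : Set.Nonempty {h | TreedepthLE (dualGraph A) h})
  obtain ⟨le, hrefl, htrans, hanti, hdown, hedgeG, hheight⟩ := hmem
  have hedge : ∀ a b (j : Fin n), a ≠ b → A a j ≠ 0 → A b j ≠ 0 → le a b ∨ le b a := by
    intro a b j hab h1 h2
    apply hedgeG
    rw [dualGraph, SimpleGraph.fromRel_adj]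
    exact ⟨hab, Or.inl ⟨j, h1, h2⟩⟩
  have hgr : GravOn A Finset.univ u := by
    obtain ⟨h1, h2, h3⟩ := hu
    refine ⟨h1, fun i _ => by rw [h2]; rfl, ?_⟩
    intro v hv0 hvker hvc
    exact h3 v hv0 (funext fun i => hvker i (Finset.mem_univ i)) hvc
  exact key_lemma A M hA le hrefl htrans hanti hdown hedge Finset.univ.card Finset.univ rfl
    (treedepth (dualGraph A)) (fun s _ hchain => hheight s hchain) u hgr
end

section
/- The treedepth of the path graph on n vertices equals ⌈log(n+1)⌉, where log is the binary logarithm. -/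
open Nat

noncomputable def V2 (x : ℕ) : ℕ := padicValNat 2 x

lemma V2_dvd (x : ℕ) : 2 ^ V2 x ∣ x := pow_padicValNat_dvd

lemma V2_not_dvd {x : ℕ} (hx : x ≠ 0) : ¬ 2 ^ (V2 x + 1) ∣ x :=
  pow_succ_padicValNat_not_dvd hx

lemma V2_lt {x h : ℕ} (hx : x ≠ 0) (hlt : x < 2 ^ h) : V2 x < h := by
  have := Nat.le_of_dvd (Nat.pos_of_ne_zero hx) (V2_dvd x)
  have := lt_of_le_of_lt this hlt
  exact (Nat.pow_lt_pow_iff_right one_lt_two).mp this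

lemma V2_odd_shift {x : ℕ} (hx : x ≠ 0) : (2:ℤ) ^ (V2 x + 1) ∣ (x:ℤ) - 2 ^ V2 x := by
  set v := V2 x with hv
  obtain ⟨k, hk⟩ := V2_dvd x
  have hodd : ¬ 2 ∣ k := by
    rintro ⟨m, hm⟩
    refine V2_not_dvd hx ⟨m, ?_⟩
    conv_lhs => rw [hk, hm]
    rw [pow_succ]; ring
  obtain ⟨j, hj⟩ := Nat.odd_iff.mpr (Nat.two_dvd_ne_zero.mp hodd)
  refine ⟨j, ?_⟩
  have hz : (x:ℤ) = 2 ^ v * k := by exact_mod_cast hk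
  rw [hz, hj]; push_cast; ring

lemma V2_dvd_int {x : ℕ} : (2:ℤ) ^ V2 x ∣ (x:ℤ) := by exact_mod_cast Int.natCast_dvd_natCast.mpr (V2_dvd x)

lemma V2_not_dvd_int {x : ℕ} (hx : x ≠ 0) : ¬ (2:ℤ) ^ (V2 x + 1) ∣ (x:ℤ) := by
  intro h
  exact V2_not_dvd hx (by exact_mod_cast h)

/-- key divisibility facts for a - b when V2 b < V2 a -/
lemma keyZ {a b : ℕ} (hb : b ≠ 0) (hv : V2 b < V2 a) :
    (2:ℤ) ^ V2 b ∣ ((a:ℤ) - b) ∧ ¬ (2:ℤ) ^ (V2 b + 1) ∣ ((a:ℤ) - b) := by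
  have hdb : (2:ℤ) ^ (V2 b + 1) ∣ (a:ℤ) :=
    dvd_trans (pow_dvd_pow 2 hv) V2_dvd_int
  constructor
  · exact dvd_sub (dvd_trans (pow_dvd_pow 2 hv.le) V2_dvd_int) V2_dvd_int
  · intro h
    exact V2_not_dvd_int hb (by have := dvd_sub hdb h; simpa using this)

/-- gap lemma -/
lemma gapZ {m d M : ℤ} (hm : 0 < m) (h1 : m ∣ d) (h2 : m ∣ M) (h3 : d < M) : d ≤ M - m := by
  have h4 : m ∣ M - d := dvd_sub h2 h1
  have := Int.le_of_dvd (by omega) h4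
  omega

/-- the BST ancestor order on positive naturals -/
def anc (a b : ℕ) : Prop :=
  a = b ∨ (V2 b < V2 a ∧ a < b + 2 ^ V2 a ∧ b < a + 2 ^ V2 a)

lemma anc_refl (a : ℕ) : anc a a := Or.inl rfl

/-- sharp bound: if anc a b nontrivially then |a-b| ≤ 2^va - 2^vb -/
lemma anc_bound {a b : ℕ} (hb : b ≠ 0) (hv : V2 b < V2 a)
    (h1 : a < b + 2 ^ V2 a) (h2 : b < a + 2 ^ V2 a) :
    (a:ℤ) - b ≤ 2 ^ V2 a - 2 ^ V2 b ∧ (b:ℤ) - a ≤ 2 ^ V2 a - 2 ^ V2 b := by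
  obtain ⟨hdvd, -⟩ := keyZ hb hv
  have hm : (0:ℤ) < 2 ^ V2 b := by positivity
  have hMm : (2:ℤ) ^ V2 b ∣ 2 ^ V2 a := pow_dvd_pow 2 hv.le
  constructor
  · have : (a:ℤ) - b < 2 ^ V2 a := by
      have := h1; push_cast at this ⊢; linarith [this]
    exact gapZ hm hdvd hMm this
  · have : (b:ℤ) - a < 2 ^ V2 a := by
      have := h2; push_cast at this ⊢; linarith [this]
    exact gapZ hm (by simpa using (dvd_neg.mpr hdvd)) hMm this

lemma anc_trans {a b c : ℕ} (hb : b ≠ 0) (hc : c ≠ 0)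
    (hab : anc a b) (hbc : anc b c) : anc a c := by
  rcases hab with rfl | ⟨hv1, h11, h12⟩
  · exact hbc
  rcases hbc with rfl | ⟨hv2, h21, h22⟩
  · exact Or.inr ⟨hv1, h11, h12⟩
  refine Or.inr ⟨hv2.trans hv1, ?_, ?_⟩
  · obtain ⟨hA, -⟩ := anc_bound hb hv1 h11 h12
    obtain ⟨hB, -⟩ := anc_bound hc hv2 h21 h22
    have hpos : (0:ℤ) < 2 ^ V2 c := by positivity
    have : (a:ℤ) < c + 2 ^ V2 a := by linarith
    exact_mod_cast this
  · obtain ⟨-, hA⟩ := anc_bound hb hv1 h11 h12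
    obtain ⟨-, hB⟩ := anc_bound hc hv2 h21 h22
    have hpos : (0:ℤ) < 2 ^ V2 c := by positivity
    have : (c:ℤ) < a + 2 ^ V2 a := by linarith
    exact_mod_cast this

lemma anc_antisymm {a b : ℕ} (hab : anc a b) (hba : anc b a) : a = b := by
  rcases hab with rfl | ⟨hv1, -, -⟩
  · rfl
  rcases hba with rfl | ⟨hv2, -, -⟩
  · rfl
  omega

lemma eq_of_dvd_of_abs_lt {m d : ℤ} (h1 : m ∣ d) (h2 : |d| < m) : d = 0 := by
  by_contra hd
  have := Int.le_of_dvd (abs_pos.mpr hd) ((dvd_abs m d).mpr h1)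
  omega

lemma anc_branch {a b c : ℕ} (ha : a ≠ 0) (hb : b ≠ 0) (hc : c ≠ 0)
    (hac : anc a c) (hbc : anc b c) : anc a b ∨ anc b a := by
  rcases hac with rfl | ⟨hv1, h11, h12⟩
  · exact Or.inr hbc
  rcases hbc with rfl | ⟨hv2, h21, h22⟩
  · exact Or.inl (Or.inr ⟨hv1, h11, h12⟩)
  by_cases hab : a = b
  · exact Or.inl (Or.inl hab)
  obtain ⟨hA1, hA2⟩ := anc_bound hc hv1 h11 h12
  obtain ⟨hB1, hB2⟩ := anc_bound hc hv2 h21 h22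
  have hcpos : (0:ℤ) < 2 ^ V2 c := by positivity
  rcases lt_trichotomy (V2 a) (V2 b) with hv | hv | hv
  · -- symmetric case: show anc b a
    right
    refine Or.inr ⟨hv, ?_, ?_⟩
    all_goals {
      obtain ⟨hd1, hd2⟩ := keyZ (a := b) (b := a) ha hv
      have habs : |(b:ℤ) - a| < 2 ^ V2 b + 2 ^ V2 a := by
        rw [abs_lt]; constructor <;> linarith
      have hne : |(b:ℤ) - a| < 2 ^ V2 b := by
        by_contra hge
        push_neg at hge
        have hdabs : (2:ℤ) ^ V2 a ∣ |(b:ℤ) - a| := (dvd_abs _ _).mpr hd1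
        have heq : |(b:ℤ) - a| = 2 ^ V2 b := by
          have h2M : (2:ℤ) ^ V2 a ∣ 2 ^ V2 b := pow_dvd_pow 2 hv.le
          have hlow : (2:ℤ) ^ V2 a ∣ |(b:ℤ) - a| - 2 ^ V2 b := dvd_sub hdabs h2M
          rcases eq_or_lt_of_le hge with h | h
          · exact h.symm
          · have := Int.le_of_dvd (by omega) hlow
            have hpa : (0:ℤ) < 2 ^ V2 a := by positivity
            linarith
        have : (2:ℤ) ^ (V2 a + 1) ∣ |(b:ℤ) - a| := by
          rw [heq]; exact pow_dvd_pow 2 hv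
        exact hd2 ((dvd_abs _ _).mp this)
      rw [abs_lt] at hne
      push_cast
      linarith [hne.1, hne.2]
    }
  · -- equal valuations: a = b, contradiction
    exfalso
    apply hab
    have hda : (2:ℤ) ^ (V2 a + 1) ∣ (a:ℤ) - 2 ^ V2 a := V2_odd_shift ha
    have hdb : (2:ℤ) ^ (V2 b + 1) ∣ (b:ℤ) - 2 ^ V2 b := V2_odd_shift hb
    rw [← hv] at hdb
    have hd : (2:ℤ) ^ (V2 a + 1) ∣ (a:ℤ) - b := by
      have := dvd_sub hda hdb
      rw [hv] at this ⊢
      simpa using this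
    rw [← hv] at hB1 hB2
    have habs : |(a:ℤ) - b| < 2 ^ (V2 a + 1) := by
      rw [abs_lt, pow_succ]
      constructor <;> linarith
    have := eq_of_dvd_of_abs_lt hd habs
    have : (a:ℤ) = b := by linarith
    exact_mod_cast this
  · left
    refine Or.inr ⟨hv, ?_, ?_⟩
    all_goals {
      obtain ⟨hd1, hd2⟩ := keyZ (a := a) (b := b) hb hv
      have habs : |(a:ℤ) - b| < 2 ^ V2 a + 2 ^ V2 b := by
        rw [abs_lt]; constructor <;> linarith
      have hne : |(a:ℤ) - b| < 2 ^ V2 a := by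
        by_contra hge
        push_neg at hge
        have hdabs : (2:ℤ) ^ V2 b ∣ |(a:ℤ) - b| := (dvd_abs _ _).mpr hd1
        have heq : |(a:ℤ) - b| = 2 ^ V2 a := by
          have h2M : (2:ℤ) ^ V2 b ∣ 2 ^ V2 a := pow_dvd_pow 2 hv.le
          have hlow : (2:ℤ) ^ V2 b ∣ |(a:ℤ) - b| - 2 ^ V2 a := dvd_sub hdabs h2M
          rcases eq_or_lt_of_le hge with h | h
          · exact h.symm
          · have := Int.le_of_dvd (by omega) hlow
            have hpb : (0:ℤ) < 2 ^ V2 b := by positivity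
            linarith
        have : (2:ℤ) ^ (V2 b + 1) ∣ |(a:ℤ) - b| := by
          rw [heq]; exact pow_dvd_pow 2 hv
        exact hd2 ((dvd_abs _ _).mp this)
      rw [abs_lt] at hne
      push_cast
      linarith [hne.1, hne.2]
    }

lemma V2_pos_of_even {x : ℕ} (hx : x ≠ 0) (h2 : 2 ∣ x) : 0 < V2 x := by
  by_contra h
  push_neg at h
  have h0 : V2 x = 0 := by omega
  have := V2_not_dvd hx
  rw [h0, pow_one] at this
  exact this h2

lemma V2_eq_zero_of_odd {x : ℕ} (h2 : ¬ 2 ∣ x) : V2 x = 0 := by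
  by_contra h
  exact h2 (dvd_trans (dvd_pow_self 2 h) (V2_dvd x))

lemma anc_adj (x : ℕ) (hx : x ≠ 0) : anc x (x+1) ∨ anc (x+1) x := by
  by_cases h2 : 2 ∣ x
  · left
    have hv : 0 < V2 x := V2_pos_of_even hx h2
    have hv1 : V2 (x+1) = 0 := V2_eq_zero_of_odd (by omega)
    refine Or.inr ⟨by omega, ?_, ?_⟩ <;>
      · have : 2 ≤ 2 ^ V2 x := by
          calc 2 = 2^1 := rfl
          _ ≤ 2 ^ V2 x := Nat.pow_le_pow_right (by norm_num) hv
        omega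
  · right
    have hv : 0 < V2 (x+1) := V2_pos_of_even (by omega) (by omega)
    have hv0 : V2 x = 0 := V2_eq_zero_of_odd h2
    refine Or.inr ⟨by omega, ?_, ?_⟩ <;>
      · have : 2 ≤ 2 ^ V2 (x+1) := by
          calc 2 = 2^1 := rfl
          _ ≤ 2 ^ V2 (x+1) := Nat.pow_le_pow_right (by norm_num) hv
        omega

lemma anc_V2_inj {a b : ℕ} (h : anc a b ∨ anc b a) (hv : V2 a = V2 b) : a = b := by
  rcases h with h | h <;> rcases h with h | ⟨hlt, -, -⟩ <;> omega

theorem upper (n : ℕ) : TreedepthLE (SimpleGraph.pathGraph n) (Nat.clog 2 (n+1)) := by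
  set h := Nat.clog 2 (n+1) with hh
  have hn2 : n + 1 ≤ 2 ^ h := Nat.le_pow_clog one_lt_two _
  refine ⟨fun i j => anc (i.1+1) (j.1+1), fun v => anc_refl _, ?_, ?_, ?_, ?_, ?_⟩
  · exact fun a b c hab hbc => anc_trans (by omega) (by omega) hab hbc
  · intro a b hab hba
    have := anc_antisymm hab hba
    exact Fin.ext (by omega)
  · intro a b c hac hbc
    exact anc_branch (by omega) (by omega) (by omega) hac hbc
  · intro a b hadj
    rw [SimpleGraph.pathGraph_adj] at hadj
    simp only
    rcases hadj with h1 | h1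
    · have heq : b.1 + 1 = (a.1 + 1) + 1 := by omega
      rw [heq]
      exact anc_adj _ (by omega)
    · have heq : a.1 + 1 = (b.1 + 1) + 1 := by omega
      rw [heq]
      exact (anc_adj _ (by omega)).symm
  · intro s hs
    classical
    have hinj : Set.InjOn (fun i : Fin n => V2 (i.1+1)) s := by
      intro a ha b hb hab
      have := anc_V2_inj (hs a ha b hb) hab
      exact Fin.ext (by omega)
    have himg : s.image (fun i : Fin n => V2 (i.1+1)) ⊆ Finset.range h := by
      intro v hv
      simp only [Finset.mem_image] at hv
      obtain ⟨i, -, rfl⟩ := hv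
      rw [Finset.mem_range]
      exact V2_lt (by omega) (by omega)
    calc s.card = (s.image _).card := (Finset.card_image_of_injOn hinj).symm
    _ ≤ (Finset.range h).card := Finset.card_le_card himg
    _ = h := Finset.card_range h

lemma exists_min (le : ℕ → ℕ → Prop) (s : Finset ℕ)
    (hrefl : ∀ x ∈ s, le x x)
    (htrans : ∀ a ∈ s, ∀ b ∈ s, ∀ c ∈ s, le a b → le b c → le a c)
    (hne : s.Nonempty) : ∃ r ∈ s, ∀ x ∈ s, le x r → le r x := by
  classical
  obtain ⟨r, hr, hmin⟩ := s.exists_min_image (fun r => (s.filter (fun x => le x r)).card) hne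
  refine ⟨r, hr, fun x hx hxr => ?_⟩
  by_contra hrx
  have hsub : s.filter (fun y => le y x) ⊆ s.filter (fun y => le y r) := by
    intro y hy
    rw [Finset.mem_filter] at hy ⊢
    exact ⟨hy.1, htrans y hy.1 x hx r hr hy.2 hxr⟩
  have hrmem : r ∈ s.filter (fun y => le y r) := Finset.mem_filter.mpr ⟨hr, hrefl r hr⟩
  have hrnot : r ∉ s.filter (fun y => le y x) := by
    rw [Finset.mem_filter]; tauto
  have : (s.filter (fun y => le y x)).card < (s.filter (fun y => le y r)).card :=
    Finset.card_lt_card (Finset.ssubset_iff_of_subset hsub |>.mpr ⟨r, hrmem, hrnot⟩)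
  have := hmin x hx
  omega

lemma lower_aux : ∀ (h : ℕ) (le : ℕ → ℕ → Prop) (a b : ℕ),
    (∀ x, a ≤ x → x < b → le x x) →
    (∀ x y z, a ≤ x → x < b → a ≤ y → y < b → a ≤ z → z < b → le x y → le y z → le x z) →
    (∀ x y z, a ≤ x → x < b → a ≤ y → y < b → a ≤ z → z < b → le x z → le y z → le x y ∨ le y x) →
    (∀ i, a ≤ i → i + 1 < b → le i (i+1) ∨ le (i+1) i) →
    (∀ s : Finset ℕ, (∀ x ∈ s, a ≤ x ∧ x < b) → (∀ x ∈ s, ∀ y ∈ s, le x y ∨ le y x) → s.card ≤ h) →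
    b < a + 2 ^ h := by
  intro h
  induction h with
  | zero =>
    intro le a b hrefl _ _ _ hcard
    by_contra hab
    push_neg at hab
    have ha : a ∈ ({a} : Finset ℕ) := Finset.mem_singleton_self a
    have := hcard {a} (by
        intro x hx
        simp only [Finset.mem_singleton] at hx
        omega)
      (by
        intro x hx y hy
        simp only [Finset.mem_singleton] at hx hy
        left
        rw [hx, hy]
        exact hrefl a le_rfl (by omega))
    simp at this
  | succ h' ih =>
    intro le a b hrefl htrans hbranch hadj hcard
    by_cases hab : b ≤ a
    · have : 0 < 2 ^ (h'+1) := Nat.pow_pos (by norm_num)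
      omega
    push_neg at hab
    -- find a minimal element r in [a, b)
    obtain ⟨r, hrmem, hrmin⟩ := exists_min le (Finset.Ico a b)
      (fun x hx => by rw [Finset.mem_Ico] at hx; exact hrefl x hx.1 hx.2)
      (fun x hx y hy z hz => by
        rw [Finset.mem_Ico] at hx hy hz
        exact htrans x y z hx.1 hx.2 hy.1 hy.2 hz.1 hz.2)
      (by rw [Finset.nonempty_Ico]; exact hab)
    rw [Finset.mem_Ico] at hrmem
    obtain ⟨hra, hrb⟩ := hrmem
    have hrmin' : ∀ x, a ≤ x → x < b → le x r → le r x := fun x h1 h2 =>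
      hrmin x (Finset.mem_Ico.mpr ⟨h1, h2⟩)
    -- r is below everything
    have key : ∀ x, a ≤ x → x < b → le r x := by
      have up : ∀ k, r + k < b → le r (r + k) := by
        intro k
        induction k with
        | zero => intro _; simpa using hrefl r hra hrb
        | succ k ihk =>
          intro hk
          have h1 : le r (r + k) := ihk (by omega)
          rcases hadj (r + k) (by omega) (by omega) with h2 | h2
          · exact htrans r (r+k) (r+k+1) hra hrb (by omega) (by omega) (by omega) (by omega) h1 h2
          · rcases hbranch r (r+k+1) (r+k) hra hrb (by omega) (by omega) (by omega) (by omega) h1 h2 with h3 | h3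
            · exact h3
            · exact hrmin' (r+k+1) (by omega) (by omega) h3
      have down : ∀ k, a + k ≤ r → le r (r - k) := by
        intro k
        induction k with
        | zero => intro _; simpa using hrefl r hra hrb
        | succ k ihk =>
          intro hk
          have h1 : le r (r - k) := ihk (by omega)
          have heq : r - (k+1) + 1 = r - k := by omega
          rcases hadj (r - (k+1)) (by omega) (by omega) with h2 | h2
          · rw [heq] at h2
            rcases hbranch r (r - (k+1)) (r - k) hra hrb (by omega) (by omega) (by omega) (by omega) h1 h2 with h3 | h3
            · exact h3
            · exact hrmin' (r - (k+1)) (by omega) (by omega) h3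
          · rw [heq] at h2
            exact htrans r (r-k) (r-(k+1)) hra hrb (by omega) (by omega) (by omega) (by omega) h1 h2
      intro x h1 h2
      rcases le_or_gt r x with hc | hc
      · have : x = r + (x - r) := by omega
        rw [this]; exact up (x - r) (by omega)
      · have : x = r - (r - x) := by omega
        rw [this]; exact down (r - x) (by omega)
    -- card bound on subintervals
    have hcard' : ∀ (a' b' : ℕ), a ≤ a' → b' ≤ b → (a' ≤ r → b' ≤ r) → (r < a' ∨ b' ≤ r) →
        ∀ s : Finset ℕ, (∀ x ∈ s, a' ≤ x ∧ x < b') → (∀ x ∈ s, ∀ y ∈ s, le x y ∨ le y x) → s.card ≤ h' := by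
      intro a' b' ha' hb' _ hside s hmem hcomp
      classical
      have hrns : r ∉ s := by
        intro hr
        have := hmem r hr
        omega
      have hins := hcard (insert r s) ?_ ?_
      · rw [Finset.card_insert_of_notMem hrns] at hins
        omega
      · intro x hx
        rcases Finset.mem_insert.mp hx with hx | hx
        · omega
        · have := hmem x hx; omega
      · intro x hx y hy
        rcases Finset.mem_insert.mp hx with hx | hx <;> rcases Finset.mem_insert.mp hy with hy | hy
        · left; rw [hx, hy]; exact hrefl r hra hrb
        · left; rw [hx]; have := hmem y hy; exact key y (by omega) (by omega)
        · right; rw [hy]; have := hmem x hx; exact key x (by omega) (by omega)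
        · exact hcomp x hx y hy
    -- apply IH to [a, r) and [r+1, b)
    have hL : r < a + 2 ^ h' := by
      apply ih le a r (fun x h1 h2 => hrefl x h1 (by omega))
        (fun x y z h1 h2 h3 h4 h5 h6 => htrans x y z h1 (by omega) h3 (by omega) h5 (by omega))
        (fun x y z h1 h2 h3 h4 h5 h6 => hbranch x y z h1 (by omega) h3 (by omega) h5 (by omega))
        (fun i h1 h2 => hadj i h1 (by omega))
        (fun s hmem hcomp => hcard' a r le_rfl (by omega) (fun _ => le_rfl) (Or.inr le_rfl) s hmem hcomp)
    have hR : b < (r+1) + 2 ^ h' := by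
      apply ih le (r+1) b (fun x h1 h2 => hrefl x (by omega) h2)
        (fun x y z h1 h2 h3 h4 h5 h6 => htrans x y z (by omega) h2 (by omega) h4 (by omega) h6)
        (fun x y z h1 h2 h3 h4 h5 h6 => hbranch x y z (by omega) h2 (by omega) h4 (by omega) h6)
        (fun i h1 h2 => hadj i (by omega) h2)
        (fun s hmem hcomp => hcard' (r+1) b (by omega) le_rfl (by omega) (Or.inl (by omega)) s hmem hcomp)
    have hp : 2 ^ (h'+1) = 2 ^ h' + 2 ^ h' := by rw [pow_succ]; ring
    omega

theorem lower {n h : ℕ} (hT : TreedepthLE (SimpleGraph.pathGraph n) h) : n + 1 ≤ 2 ^ h := by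
  classical
  obtain ⟨le, hrefl, htrans, hanti, hbranch, hadj, hcard⟩ := hT
  set le' : ℕ → ℕ → Prop := fun x y => ∃ (hx : x < n) (hy : y < n), le ⟨x, hx⟩ ⟨y, hy⟩ with hle'
  have := lower_aux h le' 0 n
    (fun x _ hx => ⟨hx, hx, hrefl _⟩)
    (fun x y z _ hx _ hy _ hz ⟨hx', hy', h1⟩ ⟨hy'', hz', h2⟩ => ⟨hx', hz', htrans _ _ _ h1 h2⟩)
    (fun x y z _ hx _ hy _ hz ⟨hx', hz', h1⟩ ⟨hy', hz'', h2⟩ => by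
      rcases hbranch ⟨x, hx'⟩ ⟨y, hy'⟩ ⟨z, hz'⟩ h1 h2 with h3 | h3
      · exact Or.inl ⟨hx', hy', h3⟩
      · exact Or.inr ⟨hy', hx', h3⟩)
    (fun i _ hi => by
      have hadj' : (SimpleGraph.pathGraph n).Adj ⟨i, by omega⟩ ⟨i+1, hi⟩ := by
        rw [SimpleGraph.pathGraph_adj]; left; rfl
      rcases hadj _ _ hadj' with h1 | h1
      · exact Or.inl ⟨by omega, hi, h1⟩
      · exact Or.inr ⟨hi, by omega, h1⟩)
    (fun s hmem hcomp => by
      have hlt : ∀ m ∈ s, m < n := fun m hm => (hmem m hm).2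
      have hc := hcard (s.attachFin hlt) ?_
      · rwa [Finset.card_attachFin] at hc
      · intro a ha b hb
        rw [Finset.mem_attachFin] at ha hb
        rcases hcomp a.1 ha b.1 hb with ⟨h1, h2, h3⟩ | ⟨h1, h2, h3⟩
        · left; convert h3 <;> exact Fin.ext rfl
        · right; convert h3 <;> exact Fin.ext rfl)
  omega


/-- the treedepth of the path on n vertices equals ⌈log₂(n+1)⌉. -/
theorem treedepth_pathGraph (n : ℕ) :
    treedepth (SimpleGraph.pathGraph n) = Nat.clog 2 (n + 1) := by
  have hu := upper n
  apply le_antisymm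
  · exact Nat.sInf_le hu
  · have hne : {h | TreedepthLE (SimpleGraph.pathGraph n) h}.Nonempty := ⟨_, hu⟩
    have hmem := Nat.sInf_mem hne
    exact (Nat.clog_le_iff_le_pow one_lt_two).mpr (lower hmem)
end

section
/- For natural numbers δ ≥ 1 and 0 ≤ s < 2^δ with binary digits b_0,…,b_{δ−1}, the system over nonnegative integers u, y_0,…,y_{δ−1}, z given by: u + y_0 = 1; 2y_j − y_{j+1} = 0 for j = 0,…,δ−2; and Σ_j b_j·y_j − z = 0, has exactly two solutions: one with u=1 and all other variables 0, and one with u=0, y_j = 2^j for all j, and z = s. -/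
lemma sum_testBit_eq_mod (s n : ℕ) :
    ∑ j ∈ Finset.range n, (if s.testBit j then 1 else 0) * 2 ^ j = s % 2 ^ n := by
  induction n with
  | zero => simp [Nat.mod_one]
  | succ n ih =>
    rw [Finset.sum_range_succ, ih, pow_succ, Nat.mod_mul]
    have ht : s.testBit n = decide (s / 2 ^ n % 2 = 1) := Nat.testBit_eq_decide_div_mod_eq
    have h2 : s / 2 ^ n % 2 < 2 := Nat.mod_lt _ (by norm_num)
    by_cases hb : s.testBit n
    · have hb' : s / 2 ^ n % 2 = 1 := by rw [ht] at hb; simpa using hb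
      rw [hb', if_pos hb]; ring
    · have hb' : s / 2 ^ n % 2 = 0 := by
        rw [ht] at hb; simp at hb; omega
      rw [hb', if_neg hb]; ring

/-- for δ ≥ 1 and 0 ≤ s < 2^δ with binary digits b₀,…,b_{δ−1},
the system over nonnegative integers u, y₀,…,y_{δ−1}, z given by u + y₀ = 1,
2yⱼ − y_{j+1} = 0 (j = 0,…,δ−2) and Σⱼ bⱼ·yⱼ − z = 0 has exactly two solutions:
u = 1 with all other variables 0, and u = 0 with yⱼ = 2^j and z = s. -/
theorem number_gadget_two_solutions (δ s : ℕ) (hδ : 0 < δ) (hs : s < 2 ^ δ)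
    (u z : ℕ) (y : Fin δ → ℕ) :
    (u + y ⟨0, hδ⟩ = 1 ∧
      (∀ j : Fin δ, ∀ h : (j : ℕ) + 1 < δ, 2 * y j = y ⟨(j : ℕ) + 1, h⟩) ∧
      (∑ j : Fin δ, (if s.testBit (j : ℕ) then 1 else 0) * y j = z)) ↔
    ((u = 1 ∧ z = 0 ∧ ∀ j, y j = 0) ∨
      (u = 0 ∧ z = s ∧ ∀ j : Fin δ, y j = 2 ^ (j : ℕ))) := by
  have hsum : ∀ f : ℕ → ℕ,
      (∑ j : Fin δ, (if s.testBit (j : ℕ) then 1 else 0) * f (j : ℕ)) =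
      ∑ j ∈ Finset.range δ, (if s.testBit j then 1 else 0) * f j := by
    intro f
    exact Fin.sum_univ_eq_sum_range (fun j => (if s.testBit j then 1 else 0) * f j) δ
  constructor
  · rintro ⟨h1, h2, h3⟩
    have key : ∀ m (h : m < δ), y ⟨m, h⟩ = y ⟨0, hδ⟩ * 2 ^ m := by
      intro m
      induction m with
      | zero => intro h; simp
      | succ m ih =>
        intro h
        have hm : m < δ := Nat.lt_of_succ_lt h
        have := h2 ⟨m, hm⟩ h
        simp only at this
        rw [← this, ih hm, pow_succ]
        ring
    have hy0 : y ⟨0, hδ⟩ = 0 ∨ y ⟨0, hδ⟩ = 1 := by omega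
    rcases hy0 with hy0 | hy0
    · left
      have hyall : ∀ j : Fin δ, y j = 0 := by
        intro j
        have := key j.val j.isLt
        simp only [Fin.eta] at this
        rw [this, hy0, zero_mul]
      refine ⟨by omega, ?_, hyall⟩
      rw [← h3]
      simp [hyall]
    · right
      have hyall : ∀ j : Fin δ, y j = 2 ^ (j : ℕ) := by
        intro j
        have := key j.val j.isLt
        simp only [Fin.eta] at this
        rw [this, hy0, one_mul]
      refine ⟨by omega, ?_, hyall⟩
      rw [← h3]
      have : (∑ j : Fin δ, (if s.testBit (j : ℕ) then 1 else 0) * y j) =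
          ∑ j : Fin δ, (if s.testBit (j : ℕ) then 1 else 0) * 2 ^ (j : ℕ) := by
        apply Finset.sum_congr rfl
        intro j _
        rw [hyall j]
      rw [this, hsum (fun j => 2 ^ j), sum_testBit_eq_mod, Nat.mod_eq_of_lt hs]
  · rintro (⟨hu, hz, hy⟩ | ⟨hu, hz, hy⟩)
    · refine ⟨by rw [hy]; omega, fun j h => by simp [hy], ?_⟩
      simp [hy, hz]
    · refine ⟨by rw [hy]; simp [hu], fun j h => by rw [hy, hy]; rw [pow_succ]; ring, ?_⟩
      have : (∑ j : Fin δ, (if s.testBit (j : ℕ) then 1 else 0) * y j) =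
          ∑ j : Fin δ, (if s.testBit (j : ℕ) then 1 else 0) * 2 ^ (j : ℕ) := by
        apply Finset.sum_congr rfl
        intro j _
        rw [hy j]
      rw [this, hsum (fun j => 2 ^ j), sum_testBit_eq_mod, Nat.mod_eq_of_lt hs, hz]
end

section
/- Let b be a nonnegative integer with binary digits c_0,…,c_{s−1} where s = ⌈log(b+1)⌉. The system over nonnegative integers z, y_0,…,y_{s−1} given by z = 1, z = y_0, and z + y_0 + ⋯ + y_{i−1} = y_i for i = 1,…,s−1 has a unique solution, in which y_i = 2^i for all i; consequently for any x ∈ ℕ^ℓ and a ∈ ℕ^ℓ, the constraint aᵀx = b is equivalent to aᵀx − Σ_{i<s} c_i·y_i = 0 in the combined system. -/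
lemma sum_filter_fin {s : ℕ} (i : Fin s) (y : Fin s → ℕ) (g : ℕ → ℕ)
    (hy : ∀ j : Fin s, (j : ℕ) < (i : ℕ) → y j = g j) :
    ∑ j ∈ Finset.univ.filter (· < i), y j = ∑ k ∈ Finset.range (i : ℕ), g k := by
  refine Finset.sum_nbij' (fun j => (j : ℕ)) (fun k => ⟨k % s, Nat.mod_lt _ i.pos⟩) ?_ ?_ ?_ ?_ ?_
  · intro j hj
    simp only [Finset.mem_filter, Finset.mem_univ, true_and, Fin.lt_def] at hj
    simpa using hj
  · intro k hk
    simp only [Finset.mem_range] at hk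
    simp only [Finset.mem_filter, Finset.mem_univ, true_and, Fin.lt_def]
    simpa [Nat.mod_eq_of_lt (hk.trans i.isLt)] using hk
  · intro j hj; ext; simp [Nat.mod_eq_of_lt j.isLt]
  · intro k hk
    simp only [Finset.mem_range] at hk
    simp [Nat.mod_eq_of_lt (hk.trans i.isLt)]
  · intro j hj
    simp only [Finset.mem_filter, Finset.mem_univ, true_and, Fin.lt_def] at hj
    exact hy j hj

lemma one_add_geom (n : ℕ) : 1 + ∑ k ∈ Finset.range n, 2 ^ k = 2 ^ n := by
  induction n with
  | zero => simp
  | succ n ih => rw [Finset.sum_range_succ, pow_succ]; omega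

lemma bits_sum : ∀ s b : ℕ, b < 2 ^ s →
    ∑ k ∈ Finset.range s, (if b.testBit k then 1 else 0) * 2 ^ k = b := by
  intro s
  induction s with
  | zero => intro b hb; interval_cases b; simp
  | succ s ih =>
    intro b hb
    rw [Finset.sum_range_succ']
    have h2 : b / 2 < 2 ^ s := by
      rw [pow_succ] at hb; omega
    have := ih (b / 2) h2
    have ht : ∀ k, b.testBit (k + 1) = (b / 2).testBit k := fun k => by
      simp [Nat.testBit_succ]
    have hsum : ∑ k ∈ Finset.range s, (if b.testBit (k + 1) then 1 else 0) * 2 ^ (k + 1)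
        = 2 * ∑ k ∈ Finset.range s, (if (b / 2).testBit k then 1 else 0) * 2 ^ k := by
      rw [Finset.mul_sum]
      refine Finset.sum_congr rfl fun k _ => ?_
      rw [ht k, pow_succ]; ring
    rw [hsum, this]
    by_cases hp : b % 2 = 1 <;> simp [Nat.testBit_zero, hp] <;> omega

/-- the powers-of-two gadget for reducing target entries. With
s = ⌈log(b+1)⌉ and binary digits c₀,…,c_{s−1} of b, the system z = 1 and
z + y₀ + ⋯ + y_{i−1} = y_i for i = 0,…,s−1 (the case i = 0 reading z = y₀) has
the unique solution z = 1, y_i = 2^i; consequently for any a, x ∈ ℕ^ℓ the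
constraint aᵀx = b is equivalent to aᵀx − Σ_{i<s} c_i·y_i = 0 in the combined
system. -/
theorem target_reduction_gadget (b s : ℕ) (hs : s = Nat.clog 2 (b + 1)) :
    (∀ (z : ℕ) (y : Fin s → ℕ),
      ((z = 1 ∧ ∀ i : Fin s, z + ∑ j ∈ Finset.univ.filter (· < i), y j = y i) ↔
        (z = 1 ∧ ∀ i : Fin s, y i = 2 ^ (i : ℕ)))) ∧
    (∀ (ℓ : ℕ) (a x : Fin ℓ → ℕ),
      (∑ i, a i * x i = b ↔
        ∃ (z : ℕ) (y : Fin s → ℕ),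
          z = 1 ∧
          (∀ i : Fin s, z + ∑ j ∈ Finset.univ.filter (· < i), y j = y i) ∧
          ∑ i, a i * x i =
            ∑ i : Fin s, (if b.testBit (i : ℕ) then 1 else 0) * y i)) := by
  have part1 : ∀ (z : ℕ) (y : Fin s → ℕ),
      ((z = 1 ∧ ∀ i : Fin s, z + ∑ j ∈ Finset.univ.filter (· < i), y j = y i) ↔
        (z = 1 ∧ ∀ i : Fin s, y i = 2 ^ (i : ℕ))) := by
    intro z y
    constructor
    · rintro ⟨hz, hrec⟩
      subst hz
      refine ⟨rfl, ?_⟩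
      have key : ∀ n : ℕ, ∀ i : Fin s, (i : ℕ) = n → y i = 2 ^ (i : ℕ) := by
        intro n
        induction n using Nat.strong_induction_on with
        | _ n ih =>
          intro i hi
          have hr := hrec i
          rw [sum_filter_fin i y (fun k => 2 ^ k)
            (fun j hj => ih (j : ℕ) (hi ▸ hj) j rfl)] at hr
          rw [← hr, one_add_geom]
      exact fun i => key (i : ℕ) i rfl
    · rintro ⟨hz, hy⟩
      subst hz
      refine ⟨rfl, fun i => ?_⟩
      rw [sum_filter_fin i y (fun k => 2 ^ k) (fun j _ => hy j), hy i, one_add_geom]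
  refine ⟨part1, fun ℓ a x => ?_⟩
  have hb : b < 2 ^ s := by
    subst hs
    have := Nat.le_pow_clog (one_lt_two) (b + 1)
    omega
  have hbsum : ∑ i : Fin s, (if b.testBit (i : ℕ) then 1 else 0) * 2 ^ (i : ℕ) = b := by
    rw [Fin.sum_univ_eq_sum_range (fun k => (if b.testBit k then 1 else 0) * 2 ^ k) s]
    exact bits_sum s b hb
  constructor
  · intro h
    refine ⟨1, fun i => 2 ^ (i : ℕ), rfl, ((part1 1 _).mpr ⟨rfl, fun _ => rfl⟩).2, ?_⟩
    rw [h, hbsum]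
  · rintro ⟨z, y, hz, hrec, hsum⟩
    have hy := ((part1 z y).mp ⟨hz, hrec⟩).2
    rw [hsum, Finset.sum_congr rfl fun i _ => by rw [hy i], hbsum]
end
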